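/- arXiv:math/0507260 — 8 statements merged into one kernel-verified Lean document; each statement's English description precedes it below -/
import Mathlib

section
/- Let F be a free group of finite rank n with basis x_1, …, x_n, and let k ≥ 2. If φ is an endomorphism of F such that φ(x_i) x_i⁻¹ ∈ Γ^k F for all i, then for every g ∈ Γ^k F one has φ(g) ≡ g mod Γ^{2k-1} F; that is, φ acts trivially on the quotient (Γ^k F)/(Γ^{2k-1} F). -/
open Subgroup
open scoped commutatorElement

/-- Three subgroups lemma modulo a normal subgroup. -/
lemma three_subgroups_mod {G : Type*} [Group G] {H₁ H₂ H₃ N : Subgroup G} [N.Normal]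
    (h1 : ⁅⁅H₂, H₃⁆, H₁⁆ ≤ N) (h2 : ⁅⁅H₃, H₁⁆, H₂⁆ ≤ N) : ⁅⁅H₁, H₂⁆, H₃⁆ ≤ N := by
  let π := QuotientGroup.mk' N
  have hker : π.ker = N := QuotientGroup.ker_mk' N
  rw [← hker, ← Subgroup.map_eq_bot_iff] at h1 h2 ⊢
  rw [map_commutator, map_commutator] at h1 h2 ⊢
  exact Subgroup.commutator_commutator_eq_bot_of_rotate h1 h2

lemma lcs_succ_eq {G : Type*} [Group G] (i : ℕ) :
    (⊤ : Subgroup G).lowerCentralSeries (i + 1) = ⁅(⊤ : Subgroup G).lowerCentralSeries i, ⊤⁆ := rfl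

/-- `⁅Γᵢ, Γⱼ⁆ ≤ Γ_{i+j+1}` for the lower central series. -/
lemma lcs_commutator_le {G : Type*} [Group G] :
    ∀ j i : ℕ, ⁅(⊤ : Subgroup G).lowerCentralSeries i, (⊤ : Subgroup G).lowerCentralSeries j⁆ ≤
      (⊤ : Subgroup G).lowerCentralSeries (i + j + 1) := by
  intro j
  induction j with
  | zero =>
      intro i
      rw [Subgroup.lowerCentralSeries_zero]
      exact le_of_eq (lcs_succ_eq i).symm
  | succ j ih =>
      intro i
      have h1 : ⁅⁅(⊤ : Subgroup G), (⊤ : Subgroup G).lowerCentralSeries i⁆, (⊤ : Subgroup G).lowerCentralSeries j⁆ ≤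
          (⊤ : Subgroup G).lowerCentralSeries (i + (j + 1) + 1) := by
        rw [Subgroup.commutator_comm (⊤ : Subgroup G), ← lcs_succ_eq]
        calc ⁅(⊤ : Subgroup G).lowerCentralSeries (i+1), (⊤ : Subgroup G).lowerCentralSeries j⁆
            ≤ (⊤ : Subgroup G).lowerCentralSeries ((i+1) + j + 1) := ih (i+1)
          _ = (⊤ : Subgroup G).lowerCentralSeries (i + (j + 1) + 1) := by ring_nf
      have h2 : ⁅⁅(⊤ : Subgroup G).lowerCentralSeries i, (⊤ : Subgroup G).lowerCentralSeries j⁆, (⊤ : Subgroup G)⁆ ≤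
          (⊤ : Subgroup G).lowerCentralSeries (i + (j + 1) + 1) := by
        calc ⁅⁅(⊤ : Subgroup G).lowerCentralSeries i, (⊤ : Subgroup G).lowerCentralSeries j⁆, (⊤ : Subgroup G)⁆
            ≤ ⁅(⊤ : Subgroup G).lowerCentralSeries (i + j + 1), (⊤ : Subgroup G)⁆ :=
              Subgroup.commutator_mono (ih i) le_rfl
          _ = (⊤ : Subgroup G).lowerCentralSeries (i + j + 1 + 1) := (lcs_succ_eq _).symm
          _ = (⊤ : Subgroup G).lowerCentralSeries (i + (j + 1) + 1) := by ring_nf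
      have h3 := three_subgroups_mod (H₁ := (⊤ : Subgroup G).lowerCentralSeries j) (H₂ := (⊤ : Subgroup G))
        (H₃ := (⊤ : Subgroup G).lowerCentralSeries i) h1 h2
      calc ⁅(⊤ : Subgroup G).lowerCentralSeries i, (⊤ : Subgroup G).lowerCentralSeries (j + 1)⁆
          = ⁅⁅(⊤ : Subgroup G).lowerCentralSeries j, ⊤⁆, (⊤ : Subgroup G).lowerCentralSeries i⁆ := by
            rw [lcs_succ_eq, Subgroup.commutator_comm]
        _ ≤ (⊤ : Subgroup G).lowerCentralSeries (i + (j + 1) + 1) := h3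

/-- The subgroup of elements moved by `φ` only by an element of `N`. -/
def fixSubgroup {G : Type*} [Group G] (φ : G →* G) (N : Subgroup G) [hN : N.Normal] :
    Subgroup G where
  carrier := {g | φ g * g⁻¹ ∈ N}
  one_mem' := by simp only [Set.mem_setOf_eq, map_one, inv_one, mul_one]; exact N.one_mem
  mul_mem' := by
    intro a b ha hb
    have h : φ (a * b) * (a * b)⁻¹ = (φ a * a⁻¹) * (a * (φ b * b⁻¹) * a⁻¹) := by
      rw [map_mul]; group
    simp only [Set.mem_setOf_eq, h]
    exact N.mul_mem ha (hN.conj_mem _ hb a)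
  inv_mem' := by
    intro a ha
    have h : φ a⁻¹ * a⁻¹⁻¹ = (a⁻¹ * (φ a * a⁻¹) * a⁻¹⁻¹)⁻¹ := by
      rw [map_inv]; group
    simp only [Set.mem_setOf_eq, h]
    exact N.inv_mem (hN.conj_mem _ ha a⁻¹)

lemma mem_fixSubgroup {G : Type*} [Group G] (φ : G →* G) (N : Subgroup G) [N.Normal] (g : G) :
    g ∈ fixSubgroup φ N ↔ φ g * g⁻¹ ∈ N := Iff.rfl

/-- Let `F` be a free group of finite rank `n` and `k ≥ 2`
(`Γ^k F = lowerCentralSeries F (k-1)` in Mathlib's indexing).  If `φ` is an endomorphism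
of `F` with `φ(x_i) x_i⁻¹ ∈ Γ^k F` for every generator `x_i`, then for every `g ∈ Γ^k F`
one has `φ(g) ≡ g mod Γ^{2k-1} F`, i.e. `φ` acts trivially on `(Γ^k F)/(Γ^{2k-1} F)`. -/
theorem endo_acts_trivially_on_lcs_quotient (n k : ℕ) (hk : 2 ≤ k)
    (φ : FreeGroup (Fin n) →* FreeGroup (Fin n))
    (hφ : ∀ i : Fin n,
      φ (FreeGroup.of i) * (FreeGroup.of i)⁻¹ ∈ (⊤ : Subgroup (FreeGroup (Fin n))).lowerCentralSeries (k - 1)) :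
    ∀ g ∈ (⊤ : Subgroup (FreeGroup (Fin n))).lowerCentralSeries (k - 1),
      φ g * g⁻¹ ∈ (⊤ : Subgroup (FreeGroup (Fin n))).lowerCentralSeries (2 * k - 2) := by
  obtain ⟨j, rfl⟩ : ∃ j, k = j + 2 := ⟨k - 2, by omega⟩
  have hk1 : j + 2 - 1 = j + 1 := by omega
  have hk2 : 2 * (j + 2) - 2 = (j + 1) + (j + 1) + 1 - 1 := by omega
  rw [hk1] at hφ ⊢
  rw [hk2]
  -- Step 1: φ(g)g⁻¹ ∈ Γ_{j+1} for all g.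
  have h0 : ∀ g : FreeGroup (Fin n), φ g * g⁻¹ ∈ (⊤ : Subgroup (FreeGroup (Fin n))).lowerCentralSeries (j + 1) := by
    have : (⊤ : Subgroup (FreeGroup (Fin n))) ≤ fixSubgroup φ ((⊤ : Subgroup (FreeGroup (Fin n))).lowerCentralSeries (j + 1)) := by
      conv_lhs => rw [← FreeGroup.closure_range_of]
      refine (Subgroup.closure_le _).mpr ?_
      rintro _ ⟨i, rfl⟩
      exact hφ i
    intro g
    exact this (Subgroup.mem_top g)
  -- Step 2: induction: g ∈ Γ_m → φ(g)g⁻¹ ∈ Γ_{m+j+1}.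
  have key : ∀ m : ℕ, (⊤ : Subgroup (FreeGroup (Fin n))).lowerCentralSeries m ≤
      fixSubgroup φ ((⊤ : Subgroup (FreeGroup (Fin n))).lowerCentralSeries (m + j + 1)) := by
    intro m
    induction m with
    | zero =>
        intro g _
        show φ g * g⁻¹ ∈ (⊤ : Subgroup (FreeGroup (Fin n))).lowerCentralSeries (0 + j + 1)
        rw [Nat.zero_add]
        exact h0 g
    | succ m ih =>
        rw [Subgroup.lowerCentralSeries_succ, Subgroup.commutator_def]
        refine (Subgroup.closure_le _).mpr ?_
        rintro x ⟨a, ha, q, -, rfl⟩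
        rw [SetLike.mem_coe, mem_fixSubgroup]
        set N := (⊤ : Subgroup (FreeGroup (Fin n))).lowerCentralSeries (m + 1 + j + 1) with hN
        have hNnormal : N.Normal := inferInstance
        set u := φ a * a⁻¹ with hu
        set v := φ q * q⁻¹ with hv
        have hua : u * a = φ a := by rw [hu]; group
        have hvq : v * q = φ q := by rw [hv]; group
        set c := a * q * a⁻¹ * q⁻¹ with hc
        -- memberships
        have hmu : u ∈ (⊤ : Subgroup (FreeGroup (Fin n))).lowerCentralSeries (m + j + 1) := ih ha
        have hmv : v ∈ (⊤ : Subgroup (FreeGroup (Fin n))).lowerCentralSeries (j + 1) := h0 q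
        have hmc : c ∈ (⊤ : Subgroup (FreeGroup (Fin n))).lowerCentralSeries (m + 1) := by
          rw [lcs_succ_eq]
          have := Subgroup.commutator_mem_commutator ha (Subgroup.mem_top q)
          rwa [commutatorElement_def] at this
        have hA : ⁅a, v⁆ ∈ N := by
          have := Subgroup.commutator_mem_commutator ha hmv
          have hle : ⁅(⊤ : Subgroup (FreeGroup (Fin n))).lowerCentralSeries m, (⊤ : Subgroup (FreeGroup (Fin n))).lowerCentralSeries (j+1)⁆ ≤ N := by
            rw [hN]
            have := lcs_commutator_le (G := FreeGroup (Fin n)) (j+1) m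
            convert this using 2
            omega
          exact hle this
        have hmuv : u * v ∈ (⊤ : Subgroup (FreeGroup (Fin n))).lowerCentralSeries j := by
          refine Subgroup.mul_mem _ ?_ ?_
          · exact Subgroup.lowerCentralSeries_antitone _ (by omega) hmu
          · exact Subgroup.lowerCentralSeries_antitone _ (by omega) hmv
        have hB : ⁅u * v, c⁆ ∈ N := by
          have := Subgroup.commutator_mem_commutator hmuv hmc
          have hle : ⁅(⊤ : Subgroup (FreeGroup (Fin n))).lowerCentralSeries j, (⊤ : Subgroup (FreeGroup (Fin n))).lowerCentralSeries (m+1)⁆ ≤ N := by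
            rw [hN]
            have := lcs_commutator_le (G := FreeGroup (Fin n)) (m+1) j
            convert this using 2
            omega
          exact hle this
        have hC : ⁅u, v * q⁆ ∈ N := by
          have := Subgroup.commutator_mem_commutator hmu (Subgroup.mem_top (v * q))
          have hle : ⁅(⊤ : Subgroup (FreeGroup (Fin n))).lowerCentralSeries (m+j+1), (⊤ : Subgroup (FreeGroup (Fin n)))⁆ ≤ N := by
            rw [hN, ← lcs_succ_eq]
            exact le_of_eq (by congr 1; omega)
          exact hle this
        have key_eq : φ c * c⁻¹ =
            (u * ⁅a, v⁆ * u⁻¹) * ⁅u * v, c⁆ * (c * ⁅u, v * q⁆ * c⁻¹) := by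
          have : φ c = (u * a) * (v * q) * (u * a)⁻¹ * (v * q)⁻¹ := by
            rw [hua, hvq, hc]
            simp only [map_mul, map_inv]
          rw [this, hc]
          simp only [commutatorElement_def]
          group
        change φ c * c⁻¹ ∈ N
        rw [key_eq]
        exact N.mul_mem (N.mul_mem (hNnormal.conj_mem _ hA u) hB) (hNnormal.conj_mem _ hC c)
  intro g hg
  have hmem := key (j + 1) hg
  rw [mem_fixSubgroup] at hmem
  have he : (j + 1) + (j + 1) + 1 - 1 = (j + 1) + j + 1 := by omega
  rw [he]
  exact hmem
end

section
/- Let F be a free group of finite rank n with basis x_1, …, x_n, and k ≥ 2. Let Aut F[k] be the group of automorphisms φ of F such that φ(x) x⁻¹ ∈ Γ^k F for all x ∈ F. Then the map J̃_k : Aut F[k] → Hom(F, (Γ^k F)/(Γ^{2k-1} F)) sending φ to the map (x_i ↦ φ(x_i) x_i⁻¹ mod Γ^{2k-1} F), extended to F using that the target is abelian, is a well-defined group homomorphism. -/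
open Subgroup
open scoped commutatorElement

section Aux

variable {G : Type*} [Group G]

lemma lcs_succ_eq_s3 (n : ℕ) :
    Subgroup.lowerCentralSeries (⊤ : Subgroup G) (n + 1) = ⁅Subgroup.lowerCentralSeries (⊤ : Subgroup G) n, ⊤⁆ := rfl

/-- Three subgroups lemma relative to a normal subgroup `N`. -/
lemma three_subgroups_le (N H₁ H₂ H₃ : Subgroup G) [N.Normal]
    (h1 : ⁅⁅H₂, H₃⁆, H₁⁆ ≤ N) (h2 : ⁅⁅H₃, H₁⁆, H₂⁆ ≤ N) : ⁅⁅H₁, H₂⁆, H₃⁆ ≤ N := by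
  let π : G →* G ⧸ N := QuotientGroup.mk' N
  have key : ∀ A B C : Subgroup G, ⁅⁅A, B⁆, C⁆ ≤ N ↔ ⁅⁅A.map π, B.map π⁆, C.map π⁆ = ⊥ := by
    intro A B C
    rw [← Subgroup.map_commutator, ← Subgroup.map_commutator, Subgroup.map_eq_bot_iff,
      QuotientGroup.ker_mk']
  rw [key]
  exact Subgroup.commutator_commutator_eq_bot_of_rotate ((key _ _ _).mp h1) ((key _ _ _).mp h2)

/-- `⁅γ_{m+1}, γ_{n+1}⁆ ≤ γ_{m+n+2}` in Mathlib's indexing. -/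
lemma lcs_commutator_le_s3 (m : ℕ) :
    ∀ n : ℕ, ⁅Subgroup.lowerCentralSeries (⊤ : Subgroup G) m, Subgroup.lowerCentralSeries (⊤ : Subgroup G) n⁆
      ≤ Subgroup.lowerCentralSeries (⊤ : Subgroup G) (m + n + 1) := by
  induction m with
  | zero =>
    intro n
    rw [Subgroup.commutator_comm]
    calc ⁅Subgroup.lowerCentralSeries (⊤ : Subgroup G) n, Subgroup.lowerCentralSeries (⊤ : Subgroup G) 0⁆
        = ⁅Subgroup.lowerCentralSeries (⊤ : Subgroup G) n, ⊤⁆ := by rw [Subgroup.lowerCentralSeries_zero]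
      _ = Subgroup.lowerCentralSeries (⊤ : Subgroup G) (n + 1) := (lcs_succ_eq_s3 n).symm
      _ ≤ Subgroup.lowerCentralSeries (⊤ : Subgroup G) (0 + n + 1) := by rw [Nat.zero_add]
  | succ m ih =>
    intro n
    have hm : Subgroup.lowerCentralSeries (⊤ : Subgroup G) (m + 1) = ⁅Subgroup.lowerCentralSeries (⊤ : Subgroup G) m, ⊤⁆ :=
      lcs_succ_eq_s3 m
    rw [hm]
    refine three_subgroups_le _ _ _ _ ?_ ?_
    · -- ⁅⁅⊤, γ n⁆, γ m⁆ ≤ γ (m+n+2)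
      calc ⁅⁅(⊤ : Subgroup G), Subgroup.lowerCentralSeries (⊤ : Subgroup G) n⁆, Subgroup.lowerCentralSeries (⊤ : Subgroup G) m⁆
          = ⁅⁅Subgroup.lowerCentralSeries (⊤ : Subgroup G) n, ⊤⁆, Subgroup.lowerCentralSeries (⊤ : Subgroup G) m⁆ := by
            rw [Subgroup.commutator_comm (⊤ : Subgroup G)]
        _ = ⁅Subgroup.lowerCentralSeries (⊤ : Subgroup G) (n + 1), Subgroup.lowerCentralSeries (⊤ : Subgroup G) m⁆ := by
            rw [← lcs_succ_eq_s3]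
        _ = ⁅Subgroup.lowerCentralSeries (⊤ : Subgroup G) m, Subgroup.lowerCentralSeries (⊤ : Subgroup G) (n + 1)⁆ :=
            Subgroup.commutator_comm _ _
        _ ≤ Subgroup.lowerCentralSeries (⊤ : Subgroup G) (m + (n + 1) + 1) := ih (n + 1)
        _ = Subgroup.lowerCentralSeries (⊤ : Subgroup G) (m + 1 + n + 1) := by ring_nf
    · -- ⁅⁅γ n, γ m⁆, ⊤⁆ ≤ γ (m+n+2)
      calc ⁅⁅Subgroup.lowerCentralSeries (⊤ : Subgroup G) n, Subgroup.lowerCentralSeries (⊤ : Subgroup G) m⁆, (⊤ : Subgroup G)⁆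
          = ⁅⁅Subgroup.lowerCentralSeries (⊤ : Subgroup G) m, Subgroup.lowerCentralSeries (⊤ : Subgroup G) n⁆, (⊤ : Subgroup G)⁆ := by
            rw [Subgroup.commutator_comm (Subgroup.lowerCentralSeries (⊤ : Subgroup G) n)]
        _ ≤ ⁅Subgroup.lowerCentralSeries (⊤ : Subgroup G) (m + n + 1), (⊤ : Subgroup G)⁆ :=
            Subgroup.commutator_mono (ih n) le_rfl
        _ = Subgroup.lowerCentralSeries (⊤ : Subgroup G) (m + n + 1 + 1) := (lcs_succ_eq_s3 _).symm
        _ = Subgroup.lowerCentralSeries (⊤ : Subgroup G) (m + 1 + n + 1) := by ring_nf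

/-- Pure group identity: commutator is unchanged after multiplying by suitable
almost-central factors. -/
lemma commutator_perturb {Q : Type*} [Group Q] (z A c B : Q)
    (hz : ∀ g : Q, Commute z g) (hAc : Commute A c) (hcK : Commute c ⁅A, B⁆) :
    ⁅z * A, c * B⁆ = ⁅A, B⁆ := by
  have e1 : ⁅z * A, c * B⁆ = z * ⁅A, c * B⁆ * z⁻¹ * ⁅z, c * B⁆ := by
    simp only [commutatorElement_def]; group
  have hz1 : ⁅z, c * B⁆ = 1 := commutatorElement_eq_one_iff_commute.mpr (hz _)
  rw [e1, hz1, mul_one, (hz ⁅A, c * B⁆).eq, mul_assoc, mul_inv_cancel, mul_one]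
  have e2 : ⁅A, c * B⁆ = ⁅A, c⁆ * (c * ⁅A, B⁆ * c⁻¹) := by
    simp only [commutatorElement_def]; group
  rw [e2, commutatorElement_eq_one_iff_commute.mpr hAc, one_mul, hcK.eq, mul_assoc,
    mul_inv_cancel, mul_one]

/-- Key fact: if `φ(x)x⁻¹ ∈ γ_{k}` (Mathlib indexing) for all `x`, then for
`a ∈ γ_m` we have `φ(a)a⁻¹ ∈ γ_{m+k}`. -/
lemma triv_action_mod {G : Type*} [Group G] (φ : G →* G) (k : ℕ)
    (hφ : ∀ x : G, φ x * x⁻¹ ∈ Subgroup.lowerCentralSeries (⊤ : Subgroup G) k) :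
    ∀ m : ℕ, ∀ a ∈ Subgroup.lowerCentralSeries (⊤ : Subgroup G) m, φ a * a⁻¹ ∈ Subgroup.lowerCentralSeries (⊤ : Subgroup G) (m + k) := by
  intro m
  induction m with
  | zero => intro a _; simpa using hφ a
  | succ m ih =>
    intro a ha
    set N : Subgroup G := Subgroup.lowerCentralSeries (⊤ : Subgroup G) (m + 1 + k) with hN
    have hNnormal : N.Normal := inferInstance
    let π : G →* G ⧸ N := QuotientGroup.mk' N
    have memiff : ∀ x y : G, x * y⁻¹ ∈ N ↔ π x = π y := by
      intro x y
      rw [show (π x = π y) ↔ (π (x * y⁻¹) = 1) by rw [map_mul, map_inv, mul_inv_eq_one]]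
      exact (QuotientGroup.eq_one_iff _).symm
    rw [memiff]
    have hcomm : ∀ u v : G, ⁅u, v⁆ ∈ N → Commute (π u) (π v) := by
      intro u v huv
      rw [← commutatorElement_eq_one_iff_commute, ← map_commutatorElement]
      exact (QuotientGroup.eq_one_iff _).mpr huv
    rw [Subgroup.lowerCentralSeries_succ] at ha
    refine Subgroup.closure_induction ?_ ?_ ?_ ?_ ha
    · rintro x ⟨p, hp, q, -, rfl⟩
      have hx : p * q * p⁻¹ * q⁻¹ = ⁅p, q⁆ := rfl
      rw [map_commutatorElement, map_commutatorElement]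
      have hφp : φ p * p⁻¹ ∈ Subgroup.lowerCentralSeries (⊤ : Subgroup G) (m + k) := ih p hp
      have hφq : φ q * q⁻¹ ∈ Subgroup.lowerCentralSeries (⊤ : Subgroup G) k := hφ q
      have dp : π (φ p) = π (φ p * p⁻¹) * π p := by
        rw [← map_mul]; congr 1; group
      have dq : π (φ q) = π (φ q * q⁻¹) * π q := by
        rw [← map_mul]; congr 1; group
      rw [dp, dq]
      refine commutator_perturb _ _ _ _ ?_ ?_ ?_
      · -- z = π (φ p * p⁻¹) is central mod N since ⁅γ_{m+k}, ⊤⁆ = γ_{m+1+k}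
        intro g
        refine QuotientGroup.induction_on g ?_
        intro g'
        refine hcomm _ g' ?_
        have h3 : ⁅φ p * p⁻¹, g'⁆ ∈ ⁅Subgroup.lowerCentralSeries (⊤ : Subgroup G) (m + k), (⊤ : Subgroup G)⁆ :=
          Subgroup.commutator_mem_commutator hφp (Subgroup.mem_top g')
        rw [← lcs_succ_eq_s3] at h3
        rwa [hN, show m + 1 + k = m + k + 1 by ring]
      · -- Commute (π p) (π (φ q * q⁻¹)) since ⁅γ_m, γ_k⁆ ≤ γ_{m+k+1}
        refine hcomm _ _ ?_
        have h3 : ⁅p, φ q * q⁻¹⁆ ∈ ⁅Subgroup.lowerCentralSeries (⊤ : Subgroup G) m, Subgroup.lowerCentralSeries (⊤ : Subgroup G) k⁆ :=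
          Subgroup.commutator_mem_commutator hp hφq
        have h2 := lcs_commutator_le_s3 m k h3
        rwa [hN, show m + 1 + k = m + k + 1 by ring]
      · -- Commute (π (φ q * q⁻¹)) (π ⁅p, q⁆)
        rw [← map_commutatorElement]
        refine hcomm _ _ ?_
        have hpq : ⁅p, q⁆ ∈ Subgroup.lowerCentralSeries (⊤ : Subgroup G) (m + 1) := by
          rw [lcs_succ_eq_s3]
          exact Subgroup.commutator_mem_commutator hp (Subgroup.mem_top q)
        have h3 : ⁅φ q * q⁻¹, ⁅p, q⁆⁆ ∈ ⁅Subgroup.lowerCentralSeries (⊤ : Subgroup G) k, Subgroup.lowerCentralSeries (⊤ : Subgroup G) (m + 1)⁆ :=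
          Subgroup.commutator_mem_commutator hφq hpq
        have h2 := lcs_commutator_le_s3 k (m + 1) h3
        exact Subgroup.lowerCentralSeries_antitone _ (by omega) h2
    · simp
    · intro x y _ _ hx hy
      simp only [map_mul, hx, hy]
    · intro x _ hx
      simp only [map_inv, hx]

end Aux

/-- Let `F` be the free group of rank `n` with basis `x_1, …, x_n`, and `k ≥ 2`
(`Γ^k F = Subgroup.lowerCentralSeries (⊤ : Subgroup F) (k-1)` in Mathlib's indexing).  For automorphisms
`φ` in `Aut F[k]`, i.e. those with `φ(x) x⁻¹ ∈ Γ^k F` for all `x ∈ F`, the map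
`J̃_k(φ) := (x_i ↦ φ(x_i) x_i⁻¹ mod Γ^{2k-1} F)` is a group homomorphism in `φ`:
`J̃_k(φψ) = J̃_k(φ)·J̃_k(ψ)` in the abelian group
`Hom(F, (Γ^k F)/(Γ^{2k-1} F))`, i.e. on each generator `x_i` the values
`(φψ)(x_i) x_i⁻¹` and `(φ(x_i) x_i⁻¹)·(ψ(x_i) x_i⁻¹)` agree modulo `Γ^{2k-1} F`
(well-definedness: the values of `J̃_k` do land in `Γ^k F`). -/
theorem johnson_refinement_hom (n k : ℕ) (hk : 2 ≤ k)
    (φ ψ : FreeGroup (Fin n) ≃* FreeGroup (Fin n))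
    (hφ : ∀ x : FreeGroup (Fin n),
      φ x * x⁻¹ ∈ Subgroup.lowerCentralSeries (⊤ : Subgroup (FreeGroup (Fin n))) (k - 1))
    (hψ : ∀ x : FreeGroup (Fin n),
      ψ x * x⁻¹ ∈ Subgroup.lowerCentralSeries (⊤ : Subgroup (FreeGroup (Fin n))) (k - 1)) :
    (∀ x : FreeGroup (Fin n),
        φ (ψ x) * x⁻¹ ∈ Subgroup.lowerCentralSeries (⊤ : Subgroup (FreeGroup (Fin n))) (k - 1)) ∧
    (∀ i : Fin n,
        (φ (ψ (FreeGroup.of i)) * (FreeGroup.of i)⁻¹) *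
          ((φ (FreeGroup.of i) * (FreeGroup.of i)⁻¹) *
            (ψ (FreeGroup.of i) * (FreeGroup.of i)⁻¹))⁻¹
          ∈ Subgroup.lowerCentralSeries (⊤ : Subgroup (FreeGroup (Fin n))) (2 * k - 2)) := by
  set F := FreeGroup (Fin n)
  constructor
  · intro x
    have h := mul_mem (hφ (ψ x)) (hψ x)
    have e : (φ (ψ x) * (ψ x)⁻¹) * (ψ x * x⁻¹) = φ (ψ x) * x⁻¹ := by group
    rwa [e] at h
  · intro i
    set x : F := FreeGroup.of i
    set a : F := ψ x * x⁻¹ with ha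
    set b : F := φ x * x⁻¹ with hb
    have haM : a ∈ Subgroup.lowerCentralSeries (⊤ : Subgroup F) (k - 1) := hψ x
    have hbM : b ∈ Subgroup.lowerCentralSeries (⊤ : Subgroup F) (k - 1) := hφ x
    -- φ(ψ x) = φ(a) * φ(x)
    have dψ : ψ x = a * x := by rw [ha, inv_mul_cancel_right]
    have key : φ (ψ x) * x⁻¹ * (b * a)⁻¹ = (φ a * a⁻¹) * ⁅a, b⁆ := by
      rw [dψ, map_mul]
      show φ a * φ x * x⁻¹ * (b * a)⁻¹ = φ a * a⁻¹ * ⁅a, b⁆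
      rw [hb, commutatorElement_def, ha]
      have gen : ∀ (u v a x : FreeGroup (Fin n)), u * v * x⁻¹ * (v * x⁻¹ * a)⁻¹ =
          u * a⁻¹ * (a * (v * x⁻¹) * a⁻¹ * (v * x⁻¹)⁻¹) := by
        intro u v a x; group
      exact gen _ _ _ _
    rw [key]
    refine mul_mem ?_ ?_
    · have := triv_action_mod (φ : F →* F) (k - 1) hφ (k - 1) a haM
      have e : k - 1 + (k - 1) = 2 * k - 2 := by omega
      rwa [e] at this
    · have := Subgroup.commutator_mem_commutator haM hbM
      have h2 := lcs_commutator_le_s3 (G := F) (k - 1) (k - 1) this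
      exact Subgroup.lowerCentralSeries_antitone _ (by omega) h2
end

section
/- Let F be a free group of finite rank n and k ≥ 2. The kernel of the natural map Aut(F/Γ^{k+1}F) → Aut(F/Γ^k F) is isomorphic, as a group, to Hom(H₁(F), (Γ^k F)/(Γ^{k+1} F)), via the map sending f in the kernel to the homomorphism (x ↦ f̃(x) x⁻¹ mod Γ^{k+1} F), where f̃ is any lift of f to an endomorphism of F. -/
open scoped commutatorElement

theorem kernel_aux {G : Type*} [Group G] (k : ℕ) (hk : 2 ≤ k) :
    ∀ (mk : G →* (G ⧸ (⊤ : Subgroup G).lowerCentralSeries k)),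
    mk = QuotientGroup.mk' ((⊤ : Subgroup G).lowerCentralSeries k) →
    ∀ (Q : Subgroup (G ⧸ (⊤ : Subgroup G).lowerCentralSeries k)),
    Q = ((⊤ : Subgroup G).lowerCentralSeries (k - 1)).map mk →
    ∀ (InKer : (G ⧸ (⊤ : Subgroup G).lowerCentralSeries k ≃* G ⧸ (⊤ : Subgroup G).lowerCentralSeries k) → Prop),
    (∀ f, InKer f ↔ ∀ y, f y * y⁻¹ ∈ Q) →
    ∀ (J : (G ⧸ (⊤ : Subgroup G).lowerCentralSeries k ≃* G ⧸ (⊤ : Subgroup G).lowerCentralSeries k) →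
        G → (G ⧸ (⊤ : Subgroup G).lowerCentralSeries k)),
    (∀ f x, J f x = f (mk x) * (mk x)⁻¹) →
    (∀ f, InKer f → (∀ x, J f x ∈ Q) ∧
        (∀ x y : G, J f (x * y) = J f x * J f y) ∧
        (∀ x y : G, J f ⁅x, y⁆ = 1)) ∧
    (∀ f g, InKer f → InKer g → (∀ x, J f x = J g x) → f = g) ∧
    (∀ f g, InKer f → InKer g → ∀ x, J (f * g) x = J f x * J g x) ∧
    (∀ c : G →* (G ⧸ (⊤ : Subgroup G).lowerCentralSeries k),
      (∀ x, c x ∈ Q) → (∀ x y : G, c ⁅x, y⁆ = 1) →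
      ∃ f, InKer f ∧ ∀ x, J f x = c x) := by
  intro mk hmk Q hQ InKer hIn J hJ
  have hk1 : k - 1 + 1 = k := by omega
  have hsurj : Function.Surjective mk := by
    rw [hmk]; exact QuotientGroup.mk'_surjective _
  have hone : ∀ w ∈ (⊤ : Subgroup G).lowerCentralSeries k, mk w = 1 := by
    intro w hw; rw [hmk]; exact (QuotientGroup.eq_one_iff w).mpr hw
  -- commutators of Γ^{k-1} with anything die in the quotient
  have hcw : ∀ w ∈ (⊤ : Subgroup G).lowerCentralSeries (k - 1), ∀ y : G, ⁅w, y⁆ ∈ (⊤ : Subgroup G).lowerCentralSeries k := by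
    intro w hw y
    rw [← hk1]
    exact Subgroup.commutator_mem_commutator hw (Subgroup.mem_top y)
  -- Q is central
  have central : ∀ q ∈ Q, ∀ g : (G ⧸ (⊤ : Subgroup G).lowerCentralSeries k), q * g = g * q := by
    intro q hq g
    rw [hQ] at hq
    obtain ⟨w, hw, rfl⟩ := hq
    obtain ⟨y, rfl⟩ := hsurj g
    have h1 : ⁅mk w, mk y⁆ = 1 := by
      rw [← map_commutatorElement]
      exact hone _ (hcw w hw y)
    exact commutatorElement_eq_one_iff_mul_comm.mp h1
  -- a hom killing commutators kills every (⊤ : Subgroup G).lowerCentralSeries m with 1 ≤ m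
  have kill : ∀ (c : G →* (G ⧸ (⊤ : Subgroup G).lowerCentralSeries k)),
      (∀ x y : G, c ⁅x, y⁆ = 1) → ∀ m, 1 ≤ m →
      ∀ w ∈ (⊤ : Subgroup G).lowerCentralSeries m, c w = 1 := by
    intro c hc m hm w hw
    have h1 : (⊤ : Subgroup G).lowerCentralSeries m ≤ c.ker := by
      refine le_trans ((⊤ : Subgroup G).lowerCentralSeries_antitone hm) ?_
      rw [Subgroup.top_lowerCentralSeries_one, commutator_def, Subgroup.commutator_le]
      intro g₁ _ g₂ _
      exact hc g₁ g₂
    exact h1 hw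
  -- Part A
  have partA : ∀ f, InKer f → (∀ x, J f x ∈ Q) ∧
      (∀ x y : G, J f (x * y) = J f x * J f y) ∧
      (∀ x y : G, J f ⁅x, y⁆ = 1) := by
    intro f hf
    replace hf := (hIn f).mp hf
    have hmem : ∀ x, J f x ∈ Q := by intro x; rw [hJ]; exact hf (mk x)
    have hmul : ∀ x y : G, J f (x * y) = J f x * J f y := by
      intro x y
      have h := central _ (hf (mk y)) (mk x)⁻¹
      rw [hJ, hJ, hJ, map_mul, map_mul, mul_inv_rev]
      calc f (mk x) * f (mk y) * ((mk y)⁻¹ * (mk x)⁻¹)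
          = f (mk x) * (f (mk y) * (mk y)⁻¹ * (mk x)⁻¹) := by group
        _ = f (mk x) * ((mk x)⁻¹ * (f (mk y) * (mk y)⁻¹)) := by rw [h]
        _ = f (mk x) * (mk x)⁻¹ * (f (mk y) * (mk y)⁻¹) := by group
    have hcomm : ∀ x y : G, J f ⁅x, y⁆ = 1 := by
      intro x y
      have h2 : (MonoidHom.mk' (J f) hmul) ⁅x, y⁆ = ⁅J f x, J f y⁆ :=
        map_commutatorElement (MonoidHom.mk' (J f) hmul) x y
      rw [show J f ⁅x, y⁆ = (MonoidHom.mk' (J f) hmul) ⁅x, y⁆ from rfl, h2]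
      exact commutatorElement_eq_one_iff_mul_comm.mpr (central _ (hmem x) _)
    exact ⟨hmem, hmul, hcomm⟩
  -- f in the kernel fixes Q pointwise
  have fixQ : ∀ f, InKer f → ∀ q ∈ Q, f q = q := by
    intro f hf q hq
    obtain ⟨hmem, hmul, hcomm⟩ := partA f hf
    rw [hQ] at hq
    obtain ⟨w, hw, rfl⟩ := hq
    have h2 : J f w = 1 :=
      kill (MonoidHom.mk' (J f) hmul) hcomm (k - 1) (by omega) w hw
    rw [hJ] at h2
    calc f (mk w) = f (mk w) * (mk w)⁻¹ * mk w := by group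
      _ = mk w := by rw [h2, one_mul]
  refine ⟨partA, ?_, ?_, ?_⟩
  · -- injectivity
    intro f g _ _ h
    ext y
    obtain ⟨x, rfl⟩ := hsurj y
    have hx := h x
    rw [hJ, hJ] at hx
    exact mul_right_cancel hx
  · -- multiplicativity
    intro f g hf hg x
    have hq : g (mk x) * (mk x)⁻¹ ∈ Q := (hIn g).mp hg (mk x)
    rw [hJ, hJ, hJ, MulAut.mul_apply]
    have key : f (g (mk x)) = (g (mk x) * (mk x)⁻¹) * f (mk x) := by
      conv_lhs => rw [show g (mk x) = (g (mk x) * (mk x)⁻¹) * mk x by group]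
      rw [map_mul, fixQ f hf _ hq]
    rw [key, mul_assoc]
    exact central _ hq _
  · -- surjectivity
    intro c hcQ hcomm
    have hck : ∀ w ∈ (⊤ : Subgroup G).lowerCentralSeries k, c w = 1 :=
      kill c hcomm k (by omega)
    have hck1 : ∀ w ∈ (⊤ : Subgroup G).lowerCentralSeries (k - 1), c w = 1 :=
      kill c hcomm (k - 1) (by omega)
    -- builder for φ_d
    have build : ∀ d : G →* (G ⧸ (⊤ : Subgroup G).lowerCentralSeries k), (∀ x, d x ∈ Q) →
        (∀ w ∈ (⊤ : Subgroup G).lowerCentralSeries k, d w = 1) →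
        ∃ φ : (G ⧸ (⊤ : Subgroup G).lowerCentralSeries k) →* (G ⧸ (⊤ : Subgroup G).lowerCentralSeries k),
          ∀ x, φ (mk x) = d x * mk x := by
      intro d hdQ hdk
      have hdmul : ∀ x y : G, d (x * y) * mk (x * y) = (d x * mk x) * (d y * mk y) := by
        intro x y
        have h := central _ (hdQ y) (mk x)
        rw [map_mul, map_mul]
        calc d x * d y * (mk x * mk y)
            = d x * (d y * mk x * mk y) := by group
          _ = d x * (mk x * d y * mk y) := by rw [h]
          _ = (d x * mk x) * (d y * mk y) := by group
      have hker : (⊤ : Subgroup G).lowerCentralSeries k ≤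
          (MonoidHom.mk' (fun x => d x * mk x) hdmul).ker := by
        intro w hw
        show d w * mk w = 1
        rw [hdk w hw, hone w hw, one_mul]
      refine ⟨QuotientGroup.lift ((⊤ : Subgroup G).lowerCentralSeries k) _ hker, ?_⟩
      intro x
      have hx : mk x = (QuotientGroup.mk x : G ⧸ (⊤ : Subgroup G).lowerCentralSeries k) := by rw [hmk]; rfl
      conv_lhs => rw [hx]
      rfl
    -- the inverse-valued hom c'
    have hcinv : ∀ x y : G, (fun x => (c x)⁻¹) (x * y)
        = (fun x => (c x)⁻¹) x * (fun x => (c x)⁻¹) y := by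
      intro x y
      show (c (x * y))⁻¹ = (c x)⁻¹ * (c y)⁻¹
      rw [map_mul, central _ (hcQ x) (c y), mul_inv_rev]
    obtain ⟨φ, hφ⟩ := build c hcQ hck
    obtain ⟨φ', hφ'⟩ := build (MonoidHom.mk' (fun x => (c x)⁻¹) hcinv)
      (fun x => Q.inv_mem (hcQ x))
      (fun w hw => by show (c w)⁻¹ = 1; rw [hck w hw, inv_one])
    have hφ'' : ∀ x : G, φ' (mk x) = (c x)⁻¹ * mk x := hφ'
    have hleft : ∀ y, φ' (φ y) = y := by
      intro y
      obtain ⟨x, rfl⟩ := hsurj y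
      have hq := hcQ x
      rw [hQ] at hq
      obtain ⟨w, hw, hwc⟩ := hq
      rw [hφ x, ← hwc, ← map_mul mk w x, hφ'' (w * x), map_mul c w x, hck1 w hw,
        one_mul, map_mul mk w x, hwc]
      group
    have hright : ∀ y, φ (φ' y) = y := by
      intro y
      obtain ⟨x, rfl⟩ := hsurj y
      have hq : (c x)⁻¹ ∈ Q := Q.inv_mem (hcQ x)
      rw [hQ] at hq
      obtain ⟨w, hw, hwc⟩ := hq
      rw [hφ'' x, ← hwc, ← map_mul mk w x, hφ (w * x), map_mul c w x, hck1 w hw,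
        one_mul, map_mul mk w x, hwc]
      group
    refine ⟨MulEquiv.mk ⟨⇑φ, ⇑φ', hleft, hright⟩ (map_mul φ), ?_, ?_⟩
    · rw [hIn]
      intro y
      obtain ⟨x, rfl⟩ := hsurj y
      show φ (mk x) * (mk x)⁻¹ ∈ Q
      rw [hφ x, mul_inv_cancel_right]
      exact hcQ x
    · intro x
      rw [hJ]
      show φ (mk x) * (mk x)⁻¹ = c x
      rw [hφ x, mul_inv_cancel_right]

/-- Let `F` be free of rank `n`, `k ≥ 2`, `N_{k+1} = F/Γ^{k+1}F`
(`Γ^{k+1} F = lowerCentralSeries F k` in Mathlib's indexing), and let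
`Q̄ ⊆ N_{k+1}` be the image of `Γ^k F`, so that `N_k = N_{k+1}/Q̄`.  An
automorphism `f` of `N_{k+1}` lies in the kernel of `Aut N_{k+1} → Aut N_k`
exactly when `f(y) y⁻¹ ∈ Q̄` for all `y`.  The map `J` sending such an `f` to
`(x ↦ f(x̄) x̄⁻¹)` (equivalently, `x ↦ f̃(x) x⁻¹ mod Γ^{k+1}F` for any lift `f̃`)
identifies this kernel, as a group, with `Hom(H₁(F), (Γ^k F)/(Γ^{k+1} F))`:
`J f` takes values in `Q̄`, is a homomorphism killing commutators (i.e. factors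
through `H₁(F)`), `J` is injective, multiplicative, and hits every homomorphism
`F → Q̄` killing commutators. -/
theorem kernel_aut_iso_hom (n k : ℕ) (hk : 2 ≤ k) :
    ∀ (mk : FreeGroup (Fin n) →*
        (FreeGroup (Fin n) ⧸ (⊤ : Subgroup (FreeGroup (Fin n))).lowerCentralSeries k)),
    mk = QuotientGroup.mk' ((⊤ : Subgroup (FreeGroup (Fin n))).lowerCentralSeries k) →
    ∀ (Q : Subgroup (FreeGroup (Fin n) ⧸ (⊤ : Subgroup (FreeGroup (Fin n))).lowerCentralSeries k)),
    Q = ((⊤ : Subgroup (FreeGroup (Fin n))).lowerCentralSeries (k - 1)).map mk →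
    ∀ (InKer : (FreeGroup (Fin n) ⧸ (⊤ : Subgroup (FreeGroup (Fin n))).lowerCentralSeries k ≃*
        FreeGroup (Fin n) ⧸ (⊤ : Subgroup (FreeGroup (Fin n))).lowerCentralSeries k) → Prop),
    (∀ f, InKer f ↔ ∀ y, f y * y⁻¹ ∈ Q) →
    ∀ (J : (FreeGroup (Fin n) ⧸ (⊤ : Subgroup (FreeGroup (Fin n))).lowerCentralSeries k ≃*
        FreeGroup (Fin n) ⧸ (⊤ : Subgroup (FreeGroup (Fin n))).lowerCentralSeries k) →
        FreeGroup (Fin n) →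
        (FreeGroup (Fin n) ⧸ (⊤ : Subgroup (FreeGroup (Fin n))).lowerCentralSeries k)),
    (∀ f x, J f x = f (mk x) * (mk x)⁻¹) →
    -- values in Q̄ and homomorphism property killing commutators
    (∀ f, InKer f → (∀ x, J f x ∈ Q) ∧
        (∀ x y : FreeGroup (Fin n), J f (x * y) = J f x * J f y) ∧
        (∀ x y : FreeGroup (Fin n), J f ⁅x, y⁆ = 1)) ∧
    -- J is injective on the kernel
    (∀ f g, InKer f → InKer g → (∀ x, J f x = J g x) → f = g) ∧
    -- J is multiplicative (MulAut multiplication is composition)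
    (∀ f g, InKer f → InKer g → ∀ x, J (f * g) x = J f x * J g x) ∧
    -- J is surjective onto Hom(H₁(F), Q̄)
    (∀ c : FreeGroup (Fin n) →*
        (FreeGroup (Fin n) ⧸ (⊤ : Subgroup (FreeGroup (Fin n))).lowerCentralSeries k),
      (∀ x, c x ∈ Q) → (∀ x y : FreeGroup (Fin n), c ⁅x, y⁆ = 1) →
      ∃ f, InKer f ∧ ∀ x, J f x = c x) := by
  exact kernel_aux k hk
end

section
/- Let G be a group. If the abelianization G/[G,G] is an acyclically closed group and [G,G] is central in G (i.e., G is nilpotent of class ≤ 2), then G is acyclically closed. More generally, a central extension G of a group H is acyclically closed if and only if H is acyclically closed. -/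
open Monoid

/-- The projection `G ∗ F_n → H₁(F_n)` killing `G`; a monomial is *acyclic*
if it lies in its kernel. -/
def acyProj (G : Type*) [Group G] (n : ℕ) :
    Coprod G (FreeGroup (Fin n)) →* Abelianization (FreeGroup (Fin n)) :=
  Coprod.lift 1 Abelianization.of

/-- An *acyclic system* over `G`: equations `x_i = w_i(x_1,…,x_n)` with each
monomial `w_i ∈ G ∗ F_n` acyclic. -/
def IsAcyclicSystem {G : Type*} [Group G] {n : ℕ}
    (w : Fin n → Coprod G (FreeGroup (Fin n))) : Prop :=
  ∀ i, acyProj G n (w i) = 1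

/-- Substitution of values `g : Fin n → G` for the variables in a monomial. -/
def acyEval {G : Type*} [Group G] {n : ℕ} (g : Fin n → G) :
    Coprod G (FreeGroup (Fin n)) →* G :=
  Coprod.lift (MonoidHom.id G) (FreeGroup.lift g)

/-- `g` is a solution of the system `x_i = w_i`. -/
def IsSolution {G : Type*} [Group G] {n : ℕ}
    (w : Fin n → Coprod G (FreeGroup (Fin n))) (g : Fin n → G) : Prop :=
  ∀ i, acyEval g (w i) = g i

/-- A group is *acyclically closed* if every acyclic system over it has a
unique solution. -/
def AcyclicallyClosed (G : Type*) [Group G] : Prop :=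
  ∀ (n : ℕ) (w : Fin n → Coprod G (FreeGroup (Fin n))),
    IsAcyclicSystem w → ∃! g : Fin n → G, IsSolution w g

section Aux
variable {G H : Type*} [Group G] [Group H] {n : ℕ}

/-- Pointwise product of a hom with a center-valued hom is a hom. -/
def mulCenterHom {K : Type*} [Monoid K] (f : K →* G) (c : K →* Subgroup.center G) : K →* G where
  toFun x := f x * (c x : G)
  map_one' := by simp
  map_mul' x y := by
    have hc : (f y) * (c x : G) = (c x : G) * (f y) :=
      (Subgroup.mem_center_iff.mp (c x).2) (f y)
    simp only [map_mul, Subgroup.coe_mul]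
    rw [mul_assoc, ← mul_assoc (f y), hc, mul_assoc, mul_assoc]

open scoped IsMulCommutative in
/-- A central-valued assignment of the variables induces a hom on `H₁(F_n)`. -/
def centerHom (z : Fin n → Subgroup.center G) :
    Abelianization (FreeGroup (Fin n)) →* Subgroup.center G :=
  Abelianization.lift (FreeGroup.lift z)

lemma acyEval_mul_center (g : Fin n → G) (z : Fin n → Subgroup.center G)
    (w : Coprod G (FreeGroup (Fin n))) :
    acyEval (fun j => g j * (z j : G)) w
      = mulCenterHom (acyEval g) ((centerHom z).comp (acyProj G n)) w := by
  suffices h : acyEval (fun j => g j * (z j : G))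
      = mulCenterHom (acyEval g) ((centerHom z).comp (acyProj G n)) by rw [h]
  apply Coprod.hom_ext
  · ext a
    simp [acyEval, mulCenterHom, acyProj, centerHom]
  · ext j
    simp [acyEval, mulCenterHom, acyProj, centerHom]

/-- Evaluation is unchanged by a central perturbation of the values, for acyclic monomials. -/
lemma acyEval_mul_center_of_acyclic (g : Fin n → G) (z : Fin n → Subgroup.center G)
    (w : Coprod G (FreeGroup (Fin n))) (hw : acyProj G n w = 1) :
    acyEval (fun j => g j * (z j : G)) w = acyEval g w := by
  rw [acyEval_mul_center]
  simp [mulCenterHom, hw]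

lemma acyProj_map (π : G →* H) (w : Coprod G (FreeGroup (Fin n))) :
    acyProj H n (Coprod.map π (MonoidHom.id _) w) = acyProj G n w := by
  suffices h : (acyProj H n).comp (Coprod.map π (MonoidHom.id _)) = acyProj G n from
    DFunLike.congr_fun h w
  apply Coprod.hom_ext
  · ext a; simp [acyProj]
  · ext j; simp [acyProj]

lemma acyEval_map (π : G →* H) (w : Coprod G (FreeGroup (Fin n))) (g : Fin n → G) :
    acyEval (fun i => π (g i)) (Coprod.map π (MonoidHom.id _) w) = π (acyEval g w) := by
  suffices h : (acyEval (fun i => π (g i))).comp (Coprod.map π (MonoidHom.id _))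
      = π.comp (acyEval g) from DFunLike.congr_fun h w
  apply Coprod.hom_ext
  · ext a; simp [acyEval]
  · ext j; simp [acyEval]

lemma coprod_map_surjective (π : G →* H) (hπ : Function.Surjective π) :
    Function.Surjective (Coprod.map π (MonoidHom.id (FreeGroup (Fin n)))) := by
  intro v
  induction v using Coprod.induction_on with
  | inl h => obtain ⟨a, rfl⟩ := hπ h; exact ⟨Coprod.inl a, by simp⟩
  | inr x => exact ⟨Coprod.inr x, by simp⟩
  | mul x y hx hy =>
    obtain ⟨a, rfl⟩ := hx; obtain ⟨b, rfl⟩ := hy; exact ⟨a * b, by simp⟩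

/-- Pushing a solution forward along `π`. -/
lemma isSolution_map (π : G →* H) (w : Fin n → Coprod G (FreeGroup (Fin n)))
    (g : Fin n → G) (hg : IsSolution w g) :
    IsSolution (fun i => Coprod.map π (MonoidHom.id _) (w i)) (fun i => π (g i)) := by
  intro i
  rw [acyEval_map, hg i]

/-- Lifting a solution backward along a central extension `π`. -/
lemma lift_solution (π : G →* H) (hπ : Function.Surjective π)
    (hc : π.ker ≤ Subgroup.center G)
    (w : Fin n → Coprod G (FreeGroup (Fin n))) (hw : IsAcyclicSystem w)
    (h' : Fin n → H) (hh' : IsSolution (fun i => Coprod.map π (MonoidHom.id _) (w i)) h') :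
    ∃ g' : Fin n → G, IsSolution w g' ∧ ∀ i, π (g' i) = h' i := by
  set g₀ : Fin n → G := fun i => Function.surjInv hπ (h' i) with hg₀def
  have hg₀ : ∀ i, π (g₀ i) = h' i := fun i => Function.surjInv_eq hπ (h' i)
  set c : Fin n → G := fun i => (g₀ i)⁻¹ * acyEval g₀ (w i) with hcdef
  have hcker : ∀ i, c i ∈ π.ker := by
    intro i
    have : π (acyEval g₀ (w i)) = h' i := by
      rw [← acyEval_map π (w i) g₀]
      have := hh' i
      simpa [hg₀] using this
    simp [hcdef, MonoidHom.mem_ker, this, hg₀]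
  have hcc : ∀ i, c i ∈ Subgroup.center G := fun i => hc (hcker i)
  refine ⟨fun i => g₀ i * c i, ?_, ?_⟩
  · intro i
    have := acyEval_mul_center_of_acyclic g₀ (fun j => ⟨c j, hcc j⟩) (w i) (hw i)
    simp only at this
    rw [this]
    simp [hcdef]
  · intro i
    have : π (c i) = 1 := hcker i
    simp [hg₀, this]

/-- The main transfer theorem for a central extension. -/
lemma acyclicallyClosed_iff_of_central (π : G →* H) (hπ : Function.Surjective π)
    (hc : π.ker ≤ Subgroup.center G) :
    AcyclicallyClosed G ↔ AcyclicallyClosed H := by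
  constructor
  · intro hG n v hv
    -- lift the system
    have hlift : ∀ i, ∃ w : Coprod G (FreeGroup (Fin n)),
        Coprod.map π (MonoidHom.id _) w = v i := fun i =>
      coprod_map_surjective π hπ (v i)
    choose w hwv using hlift
    have hw : IsAcyclicSystem w := by
      intro i
      have := hv i
      rw [← hwv i, acyProj_map] at this
      exact this
    obtain ⟨g, hg, hgu⟩ := hG n w hw
    refine ⟨fun i => π (g i), ?_, ?_⟩
    · have := isSolution_map π w g hg
      simpa [hwv] using this
    · intro h' hh'
      have hh'' : IsSolution (fun i => Coprod.map π (MonoidHom.id _) (w i)) h' := by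
        simpa [hwv] using hh'
      obtain ⟨g', hg', hg'π⟩ := lift_solution π hπ hc w hw h' hh''
      have : g' = g := hgu g' hg'
      funext i
      rw [← hg'π i, this]
  · intro hH n w hw
    set v : Fin n → Coprod H (FreeGroup (Fin n)) :=
      fun i => Coprod.map π (MonoidHom.id _) (w i) with hvdef
    have hv : IsAcyclicSystem v := by
      intro i; rw [hvdef]; simpa [acyProj_map] using hw i
    obtain ⟨h, hh, hhu⟩ := hH n v hv
    obtain ⟨g, hg, hgπ⟩ := lift_solution π hπ hc w hw h hh
    refine ⟨g, hg, ?_⟩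
    intro g' hg'
    have hπg' : (fun i => π (g' i)) = h := hhu _ (isSolution_map π w g' hg')
    have hπg : (fun i => π (g i)) = h := hhu _ (isSolution_map π w g hg)
    -- g' = g * z with z central
    have hz : ∀ i, (g i)⁻¹ * g' i ∈ Subgroup.center G := by
      intro i
      apply hc
      have h1 : π (g i) = h i := congrFun hπg i
      have h2 : π (g' i) = h i := congrFun hπg' i
      simp [MonoidHom.mem_ker, h1, h2]
    funext i
    have key := acyEval_mul_center_of_acyclic g (fun j => ⟨(g j)⁻¹ * g' j, hz j⟩) (w i) (hw i)
    simp only [mul_inv_cancel_left] at key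
    rw [hg i] at key
    calc g' i = acyEval g' (w i) := (hg' i).symm
    _ = g i := by simpa using key
    
lemma abelianization_ker : (Abelianization.of : G →* Abelianization G).ker = commutator G := by
  ext x
  rw [MonoidHom.mem_ker]
  exact QuotientGroup.eq_one_iff x

end Aux

/-- A central extension `G` of `H` is acyclically closed iff `H` is.  In
particular (taking `H = G/[G,G]`), if `[G,G]` is central in `G` and the
abelianization of `G` is acyclically closed, then so is `G`. -/
theorem acyclicallyClosed_central_extension :
    (∀ (G : Type) [Group G],
        commutator G ≤ Subgroup.center G →
        AcyclicallyClosed (Abelianization G) →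
        AcyclicallyClosed G) ∧
    (∀ (G H : Type) [Group G] [Group H] (π : G →* H),
        Function.Surjective π → π.ker ≤ Subgroup.center G →
        (AcyclicallyClosed G ↔ AcyclicallyClosed H)) := by
  constructor
  · intro G _ hcomm hab
    have hsurj : Function.Surjective (Abelianization.of : G →* Abelianization G) := by
      intro x
      exact Quotient.inductionOn' x fun a => ⟨a, rfl⟩
    have hker : (Abelianization.of : G →* Abelianization G).ker ≤ Subgroup.center G := by
      rw [abelianization_ker]; exact hcomm
    exact (acyclicallyClosed_iff_of_central _ hsurj hker).mpr hab
  · intro G H _ _ π hsurj hker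
    exact acyclicallyClosed_iff_of_central π hsurj hker
end

section
/- Every abelian group is acyclically closed: for any abelian group G and any acyclic system x_i = w_i(x₁,…,x_n) over G, there is a unique solution, obtained by substituting the abelianized values. -/
open Monoid

lemma acyEval_eq_of_acyclic {G : Type*} [CommGroup G] {n : ℕ} (g : Fin n → G)
    (w : Coprod G (FreeGroup (Fin n))) (hw : acyProj G n w = 1) :
    acyEval g w = acyEval (fun _ => (1 : G)) w := by
  have key : acyEval g = (acyEval (fun _ => (1 : G))) *
      ((Abelianization.lift (FreeGroup.lift g)).comp (acyProj G n)) := by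
    apply Coprod.hom_ext
    · ext x
      simp [acyEval, acyProj]
    · ext x
      simp [acyEval, acyProj]
  rw [key]
  simp [hw]

/-- Every abelian group is acyclically closed; the unique solution of an
acyclic system is obtained by substituting the abelianized values, i.e. by
evaluating each `w_i` with all variables set to `1`. -/
theorem abelian_acyclicallyClosed (G : Type*) [CommGroup G] :
    AcyclicallyClosed G ∧
      ∀ (n : ℕ) (w : Fin n → Monoid.Coprod G (FreeGroup (Fin n))),
        IsAcyclicSystem w →
          IsSolution w (fun i => acyEval (fun _ => (1 : G)) (w i)) := by
  have sol : ∀ (n : ℕ) (w : Fin n → Monoid.Coprod G (FreeGroup (Fin n))),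
      IsAcyclicSystem w →
        IsSolution w (fun i => acyEval (fun _ => (1 : G)) (w i)) := by
    intro n w hw i
    exact acyEval_eq_of_acyclic _ _ (hw i)
  refine ⟨fun n w hw => ⟨_, sol n w hw, fun h hsol => ?_⟩, sol⟩
  funext i
  rw [← hsol i, acyEval_eq_of_acyclic _ _ (hw i)]
end

section
/- Every nilpotent group is acyclically closed. -/
open Monoid

section Helpers

variable {G H : Type*} [Group G] [Group H] {n : ℕ}

open scoped IsMulCommutative

/-- transfer of monomials along a group hom -/
noncomputable def acyMap (f : G →* H) (n : ℕ) :
    Coprod G (FreeGroup (Fin n)) →* Coprod H (FreeGroup (Fin n)) :=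
  Coprod.lift (Coprod.inl.comp f) Coprod.inr

lemma acyProj_acyMap (f : G →* H) (v : Coprod G (FreeGroup (Fin n))) :
    acyProj H n (acyMap f n v) = acyProj G n v := by
  have : (acyProj H n).comp (acyMap f n) = acyProj G n := by
    apply Coprod.hom_ext <;> ext x <;>
      simp [acyProj, acyMap]
  exact DFunLike.congr_fun this v

lemma acyEval_acyMap (f : G →* H) (g : Fin n → G) (v : Coprod G (FreeGroup (Fin n))) :
    acyEval (fun i => f (g i)) (acyMap f n v) = f (acyEval g v) := by
  have : (acyEval (fun i => f (g i))).comp (acyMap f n) = f.comp (acyEval g) := by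
    apply Coprod.hom_ext <;> ext x <;>
      simp [acyEval, acyMap]
  exact DFunLike.congr_fun this v

/-- perturbing a substitution by central elements changes the value by
the image of the acyclic projection. -/
lemma acyEval_central (g : Fin n → G) (z : Fin n → Subgroup.center G)
    (v : Coprod G (FreeGroup (Fin n))) :
    acyEval (fun i => g i * (z i : G)) v =
      acyEval g v *
        ((Subgroup.center G).subtype ((Abelianization.lift (FreeGroup.lift z)) (acyProj G n v))) := by
  set ζ : Abelianization (FreeGroup (Fin n)) →* Subgroup.center G :=
    Abelianization.lift (FreeGroup.lift z)
  let ψ : Coprod G (FreeGroup (Fin n)) →* G :=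
    { toFun := fun v => acyEval g v * ((Subgroup.center G).subtype (ζ (acyProj G n v)))
      map_one' := by simp
      map_mul' := by
        intro a b
        have hc : ∀ (c : Subgroup.center G) (x : G),
            x * (Subgroup.center G).subtype c = (Subgroup.center G).subtype c * x := fun c x =>
          Subgroup.mem_center_iff.mp c.2 x
        simp only [map_mul]
        simp only [mul_assoc]
        rw [← mul_assoc ((acyEval g) b), hc (ζ ((acyProj G n) a)) ((acyEval g) b), mul_assoc] }
  have : acyEval (fun i => g i * (z i : G)) = ψ := by
    apply Coprod.hom_ext <;> ext x <;>
      simp [ψ, acyEval, acyProj, ζ]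
  exact DFunLike.congr_fun this v

end Helpers

section Steps

variable {G : Type*} [Group G]

lemma ac_of_subsingleton [Subsingleton G] : AcyclicallyClosed G := by
  intro n w _
  refine ⟨fun _ => 1, fun i => Subsingleton.elim _ _, fun g' _ => funext fun i => Subsingleton.elim _ _⟩

lemma ac_of_quotient_center
    (hq : AcyclicallyClosed (G ⧸ Subgroup.center G)) : AcyclicallyClosed G := by
  intro n w hw
  set Z := Subgroup.center G
  set π : G →* G ⧸ Z := QuotientGroup.mk' Z
  set wbar : Fin n → Coprod (G ⧸ Z) (FreeGroup (Fin n)) := fun i => acyMap π n (w i)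
  have hwbar : IsAcyclicSystem wbar := fun i => by
    show acyProj _ n (acyMap π n (w i)) = 1
    rw [acyProj_acyMap]; exact hw i
  obtain ⟨ubar, hubar, huniq⟩ := hq n wbar hwbar
  -- a set-theoretic lift
  set u : Fin n → G := fun i => Quotient.out (ubar i) with hu
  have hπu : ∀ i, π (u i) = ubar i := fun i => Quotient.out_eq (ubar i)
  -- solutions project to solutions
  have proj_sol : ∀ g : Fin n → G, IsSolution w g → IsSolution wbar (fun i => π (g i)) := by
    intro g hg i
    rw [show wbar i = acyMap π n (w i) from rfl, acyEval_acyMap, hg i]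
  -- central correction
  have hz : ∀ i, (u i)⁻¹ * acyEval u (w i) ∈ Z := by
    intro i
    have hπ : π (acyEval u (w i)) = ubar i := by
      have := acyEval_acyMap π u (w i)
      rw [show (fun i => π (u i)) = ubar from funext hπu] at this
      rw [← this]; exact hubar i
    have h1 : π ((u i)⁻¹ * acyEval u (w i)) = 1 := by
      rw [map_mul, map_inv, hπ, hπu i, inv_mul_cancel]
    exact (QuotientGroup.eq_one_iff _).mp h1
  set z : Fin n → Z := fun i => ⟨(u i)⁻¹ * acyEval u (w i), hz i⟩
  set g : Fin n → G := fun i => u i * (z i : G) with hgdef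
  have key : ∀ g₀ : Fin n → G, ∀ z₀ : Fin n → Z, ∀ i,
      acyEval (fun j => g₀ j * (z₀ j : G)) (w i) = acyEval g₀ (w i) := by
    intro g₀ z₀ i
    rw [acyEval_central, hw i, map_one]
    simp
  have hsol : IsSolution w g := by
    intro i
    rw [show g = fun j => u j * (z j : G) from rfl, key u z i]
    show acyEval u (w i) = u i * ((u i)⁻¹ * acyEval u (w i))
    group
  refine ⟨g, hsol, ?_⟩
  intro g' hg'
  have hproj : (fun i => π (g' i)) = (fun i => π (g i)) := by
    rw [huniq _ (proj_sol g' hg'), huniq _ (proj_sol g hsol)]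
  have hz' : ∀ i, (g i)⁻¹ * g' i ∈ Z := by
    intro i
    have h1 : π ((g i)⁻¹ * g' i) = 1 := by
      rw [map_mul, map_inv, congrFun hproj i, inv_mul_cancel]
    exact (QuotientGroup.eq_one_iff _).mp h1
  set z' : Fin n → Z := fun i => ⟨(g i)⁻¹ * g' i, hz' i⟩
  have hg'eq : g' = fun i => g i * (z' i : G) := by
    funext i; show g' i = g i * ((g i)⁻¹ * g' i); group
  funext i
  have h1 : acyEval g' (w i) = g' i := hg' i
  have h2 : acyEval g' (w i) = g i :=
    (congrArg (fun f => acyEval f (w i)) hg'eq).trans ((key g z' i).trans (hsol i))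
  exact h1.symm.trans h2

end Steps

/-- Every nilpotent group is acyclically closed. -/
theorem nilpotent_acyclicallyClosed (G : Type*) [Group G]
    (h : Group.IsNilpotent G) : AcyclicallyClosed G := by
  obtain ⟨c, hc⟩ : ∃ c, Group.nilpotencyClass G ≤ c := ⟨_, le_refl _⟩
  induction c generalizing G with
  | zero =>
    have : Subsingleton G := nilpotencyClass_zero_iff_subsingleton.mp (Nat.le_zero.mp hc)
    exact ac_of_subsingleton
  | succ c ih =>
    by_cases hs : Subsingleton G
    · exact ac_of_subsingleton
    · apply ac_of_quotient_center
      apply ih _ inferInstance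
      rw [nilpotencyClass_quotient_center]
      omega
end

section
/- Let (M, i₊, i₋) and (N, j₊, j₋) be elements of the monoid A_n of triples (G, φ₊, φ₋) where G is a finitely presentable group and φ± : F_n → G are 2-connected homomorphisms, with multiplication (G, φ₊, φ₋)·(G', ψ₊, ψ₋) = (G ∗_{F_n} G', φ₊, ψ₋) using the amalgamated product over φ₋ and ψ₊. Then in the quotient group B_n by homology cobordism, the inverse of the class of (G, φ₊, φ₋) is the class of (G, φ₋, φ₊); explicitly, the fold map G ∗_{F_n} G → G together with φ₊ : F_n → G gives a homology cobordism between (G, φ₊, φ₋)·(G, φ₋, φ₊) and the identity (F_n, id, id). -/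
/-- The canonical free presentation `FreeGroup G → G` of a group. -/
def freePres (G : Type*) [Group G] : FreeGroup G →* G := FreeGroup.lift id

/-- Surjectivity on second group homology `H₂`, expressed via Hopf's formula
`H₂(G) = (R ∩ [F,F])/[F,R]` for the canonical presentation `G = F/R`,
`F = FreeGroup G`: the lift `FreeGroup f : FreeGroup A → FreeGroup B` of `f`
carries `(R_A ∩ [F_A,F_A])` onto `(R_B ∩ [F_B,F_B])` modulo `[F_B,R_B]`. -/
def H2Surjective {A B : Type*} [Group A] [Group B] (f : A →* B) : Prop :=
  ∀ y ∈ (freePres B).ker ⊓ commutator (FreeGroup B),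
    ∃ x ∈ (freePres A).ker ⊓ commutator (FreeGroup A),
      y⁻¹ * FreeGroup.map f x ∈
        ⁅((freePres B).ker : Subgroup (FreeGroup B)), (⊤ : Subgroup (FreeGroup B))⁆

/-- A homomorphism is *2-connected* if it induces an isomorphism on `H₁`
(abelianizations) and a surjection on `H₂`. -/
def TwoConnected {A B : Type*} [Group A] [Group B] (f : A →* B) : Prop :=
  Function.Bijective (Abelianization.map f) ∧ H2Surjective f

/-- A group is finitely presentable if it is isomorphic to a quotient of a
finitely generated free group by the normal closure of finitely many relators. -/
def FinitelyPresentable (G : Type*) [Group G] : Prop :=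
  ∃ (m : ℕ) (S : Finset (FreeGroup (Fin m))),
    Nonempty ((FreeGroup (Fin m) ⧸
      Subgroup.normalClosure (S : Set (FreeGroup (Fin m)))) ≃* G)

open Subgroup

@[simp] lemma freePres_of {G : Type*} [Group G] (g : G) : freePres G (FreeGroup.of g) = g :=
  FreeGroup.lift_apply_of

section Diff

variable {A F B : Type*} [Group A] [Group F] [Group B]

open scoped commutatorElement in
/-- Elements of the kernel become central in `F ⧸ ⁅ker ρ, ⊤⁆`. -/
lemma central_mk (ρ : F →* B) {r : F} (hr : r ∈ ρ.ker)
    (q : F ⧸ (⁅ρ.ker, (⊤ : Subgroup F)⁆ : Subgroup F)) :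
    Commute ((QuotientGroup.mk' _ r : F ⧸ (⁅ρ.ker, (⊤ : Subgroup F)⁆ : Subgroup F))) q := by
  induction q using QuotientGroup.induction_on with
  | H g =>
    have h : ⁅r, g⁆ ∈ (⁅ρ.ker, (⊤ : Subgroup F)⁆ : Subgroup F) :=
      commutator_mem_commutator hr (mem_top g)
    have : (QuotientGroup.mk' (⁅ρ.ker, (⊤ : Subgroup F)⁆ : Subgroup F)) ⁅r, g⁆ = 1 := by
      rw [← MonoidHom.mem_ker, QuotientGroup.ker_mk']; exact h
    rw [map_commutatorElement] at this
    exact commutatorElement_eq_one_iff_commute.mp this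

/-- The "difference" homomorphism of two lifts agreeing after `ρ`. -/
def diffHom (ρ : F →* B) (α α' : A →* F) (h : ρ.comp α = ρ.comp α') :
    A →* F ⧸ (⁅ρ.ker, (⊤ : Subgroup F)⁆ : Subgroup F) where
  toFun a := QuotientGroup.mk' _ (α a * (α' a)⁻¹)
  map_one' := by simp
  map_mul' x y := by
    have hker : ∀ a : A, α a * (α' a)⁻¹ ∈ ρ.ker := by
      intro a
      simp only [MonoidHom.mem_ker, map_mul, map_inv]
      have := DFunLike.congr_fun h a
      simp only [MonoidHom.comp_apply] at this
      rw [this, mul_inv_cancel]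
    have hcy := central_mk ρ (hker y) (QuotientGroup.mk' _ ((α' x)⁻¹))
    simp only [map_mul, map_inv] at hcy ⊢
    calc (QuotientGroup.mk' _ (α x) : F ⧸ _) * QuotientGroup.mk' _ (α y) *
          ((QuotientGroup.mk' _ (α' x)) * QuotientGroup.mk' _ (α' y))⁻¹
        = QuotientGroup.mk' _ (α x) * ((QuotientGroup.mk' _ (α y) *
            (QuotientGroup.mk' _ (α' y))⁻¹) * (QuotientGroup.mk' _ (α' x))⁻¹) := by
          group
      _ = QuotientGroup.mk' _ (α x) * ((QuotientGroup.mk' _ (α' x))⁻¹ *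
            (QuotientGroup.mk' _ (α y) * (QuotientGroup.mk' _ (α' y))⁻¹)) := by
          rw [hcy]
      _ = _ := by group

@[simp] lemma diffHom_apply (ρ : F →* B) (α α' : A →* F) (h : ρ.comp α = ρ.comp α') (a : A) :
    diffHom ρ α α' h a = QuotientGroup.mk' _ (α a * (α' a)⁻¹) := rfl

lemma diffHom_central (ρ : F →* B) (α α' : A →* F) (h : ρ.comp α = ρ.comp α') (a : A)
    (q : F ⧸ (⁅ρ.ker, (⊤ : Subgroup F)⁆ : Subgroup F)) : Commute (diffHom ρ α α' h a) q := by
  have hker : α a * (α' a)⁻¹ ∈ ρ.ker := by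
    simp only [MonoidHom.mem_ker, map_mul, map_inv]
    have := DFunLike.congr_fun h a
    simp only [MonoidHom.comp_apply] at this
    rw [this, mul_inv_cancel]
  exact central_mk ρ hker q

lemma diffHom_eq_one_of_commutator (ρ : F →* B) (α α' : A →* F) (h : ρ.comp α = ρ.comp α')
    {a : A} (ha : a ∈ commutator A) : diffHom ρ α α' h a = 1 := by
  revert a
  suffices hle : commutator A ≤ (diffHom ρ α α' h).ker by
    intro a ha; exact hle ha
  rw [commutator_eq_closure, Subgroup.closure_le]
  rintro x ⟨p, q, rfl⟩
  simp only [SetLike.mem_coe, MonoidHom.mem_ker, map_commutatorElement]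
  exact commutatorElement_eq_one_iff_commute.mpr (diffHom_central ρ α α' h p _)

end Diff
def HopfTrivial (B : Type*) [Group B] : Prop :=
  (freePres B).ker ⊓ commutator (FreeGroup B) ≤
    ⁅((freePres B).ker : Subgroup (FreeGroup B)), (⊤ : Subgroup (FreeGroup B))⁆

section Hopf

variable {A B X ι : Type*} [Group A] [Group B]

/-- Mapping the "relations-commutator" subgroup. -/
lemma map_relcomm_le {F₁ F₂ : Type*} [Group F₁] [Group F₂] (f : F₁ →* F₂)
    (N₁ : Subgroup F₁) (N₂ : Subgroup F₂) (h : ∀ x ∈ N₁, f x ∈ N₂) :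
    ∀ x ∈ (⁅N₁, (⊤ : Subgroup F₁)⁆ : Subgroup F₁), f x ∈ (⁅N₂, (⊤ : Subgroup F₂)⁆ : Subgroup F₂) := by
  intro x hx
  have : f x ∈ Subgroup.map f ⁅N₁, ⊤⁆ := Subgroup.mem_map_of_mem f hx
  rw [Subgroup.map_commutator] at this
  refine Subgroup.commutator_mono ?_ le_top this
  rintro y ⟨z, hz, rfl⟩
  exact h z hz

lemma freePres_naturality (f : A →* B) :
    (freePres B).comp (FreeGroup.map f) = f.comp (freePres A) := by
  apply FreeGroup.ext_hom
  intro a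
  simp [FreeGroup.map.of]

/-- `H₂` of a free group vanishes (Hopf-formula form). -/
lemma hopfTrivial_free (ι : Type*) : HopfTrivial (FreeGroup ι) := by
  intro x hx
  obtain ⟨hx1, hx2⟩ := hx
  set ρ : FreeGroup (FreeGroup ι) →* FreeGroup ι := freePres (FreeGroup ι)
  set s : FreeGroup ι →* FreeGroup (FreeGroup ι) :=
    FreeGroup.lift (fun i => FreeGroup.of (FreeGroup.of i)) with hs
  have hρs : ρ.comp s = MonoidHom.id _ := by
    apply FreeGroup.ext_hom; intro i; simp [hs, ρ]
  have h : ρ.comp (MonoidHom.id _) = ρ.comp (s.comp ρ) := by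
    rw [← MonoidHom.comp_assoc, hρs, MonoidHom.comp_id, MonoidHom.id_comp]
  have hd := diffHom_eq_one_of_commutator ρ (MonoidHom.id _) (s.comp ρ) h hx2
  simp only [diffHom_apply, MonoidHom.id_apply, MonoidHom.comp_apply] at hd
  rw [show ρ x = 1 from hx1, map_one, inv_one, mul_one] at hd
  rwa [← MonoidHom.mem_ker, QuotientGroup.ker_mk'] at hd

/-- If `B` receives a 2-connected-on-`H₂` map from a free group then `H₂(B) = 0`. -/
lemma hopfTrivial_of_h2surj (f : FreeGroup ι →* B) (hf : H2Surjective f) : HopfTrivial B := by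
  intro y hy
  obtain ⟨x, hx, hyx⟩ := hf y hy
  have hx' := hopfTrivial_free ι hx
  have hmap : FreeGroup.map f x ∈
      (⁅((freePres B).ker : Subgroup (FreeGroup B)), (⊤ : Subgroup (FreeGroup B))⁆ :
        Subgroup (FreeGroup B)) := by
    refine map_relcomm_le (FreeGroup.map f) (freePres (FreeGroup ι)).ker (freePres B).ker ?_ x hx'
    intro w hw
    have := DFunLike.congr_fun (freePres_naturality f) w
    simp only [MonoidHom.comp_apply] at this
    simp only [MonoidHom.mem_ker] at hw ⊢
    rw [this, hw, map_one]
  have : y⁻¹ ∈ (⁅((freePres B).ker : Subgroup (FreeGroup B)), (⊤ : Subgroup (FreeGroup B))⁆ :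
      Subgroup (FreeGroup B)) := by
    have := mul_mem hyx (inv_mem hmap)
    simpa using this
  simpa using inv_mem this

/-- Any hom into a Hopf-trivial group is surjective on `H₂`. -/
lemma h2surj_of_hopfTrivial (f : A →* B) (hB : HopfTrivial B) : H2Surjective f := by
  intro y hy
  refine ⟨1, ⟨?_, one_mem _⟩, ?_⟩
  · simp [MonoidHom.mem_ker]
  · rw [map_one, mul_one]
    exact inv_mem (hB hy)

/-- A split surjection is surjective on `H₂`. -/
lemma h2surj_of_split (f : A →* B) (s : B →* A) (hs : f.comp s = MonoidHom.id B) :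
    H2Surjective f := by
  intro y hy
  rw [Subgroup.mem_inf] at hy
  obtain ⟨hy1, hy2⟩ := hy
  refine ⟨FreeGroup.map s y, Subgroup.mem_inf.mpr ⟨?_, ?_⟩, ?_⟩
  · have := DFunLike.congr_fun (freePres_naturality s) y
    simp only [MonoidHom.comp_apply] at this
    simp only [MonoidHom.mem_ker] at hy1 ⊢
    rw [this, hy1, map_one]
  · have h2 : FreeGroup.map s y ∈
        Subgroup.map (FreeGroup.map (s : B → A)) ⁅(⊤ : Subgroup (FreeGroup B)), ⊤⁆ := by
      rw [← commutator_def]; exact Subgroup.mem_map_of_mem _ hy2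
    rw [Subgroup.map_commutator] at h2
    rw [commutator_def]
    exact Subgroup.commutator_mono le_top le_top h2
  · have : (FreeGroup.map f) ((FreeGroup.map s) y) = y := by
      have h1 : (FreeGroup.map (f : A → B)).comp (FreeGroup.map (s : B → A)) =
          FreeGroup.map ((f : A → B) ∘ (s : B → A)) := by
        apply FreeGroup.ext_hom; intro a; simp [FreeGroup.map.of]
      have h2 : ((f : A → B) ∘ (s : B → A)) = id := by
        funext b
        have := DFunLike.congr_fun hs b
        simpa using this
      have := DFunLike.congr_fun h1 y
      simp only [MonoidHom.comp_apply] at this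
      rw [this, h2]
      have : FreeGroup.map (id : B → B) = MonoidHom.id _ := by
        apply FreeGroup.ext_hom; intro a; simp [FreeGroup.map.of]
      rw [this]; rfl
    rw [this, inv_mul_cancel]
    exact one_mem _

end Hopf
section Transfer

variable {X B : Type*} [Group B]

/-- Hopf-triviality can be checked on any (surjective) free presentation. -/
lemma hopfTrivial_of_presentation (ρ : FreeGroup X →* B) (hsurj : Function.Surjective ρ)
    (h : ρ.ker ⊓ commutator (FreeGroup X) ≤ ⁅ρ.ker, (⊤ : Subgroup (FreeGroup X))⁆) :
    HopfTrivial B := by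
  classical
  set c : FreeGroup B →* B := freePres B
  set β : FreeGroup X →* FreeGroup B := FreeGroup.map (fun x => ρ (FreeGroup.of x)) with hβ
  set α : FreeGroup B →* FreeGroup X :=
    FreeGroup.lift (fun b => Classical.choose (hsurj b)) with hα
  have hcβ : c.comp β = ρ := by
    apply FreeGroup.ext_hom; intro x; simp [hβ, c, FreeGroup.map.of]
  have hρα : ρ.comp α = c := by
    apply FreeGroup.ext_hom; intro b
    simp only [MonoidHom.comp_apply, hα, FreeGroup.lift_apply_of]
    rw [Classical.choose_spec (hsurj b)]
    simp [c]
  have hcomp : c.comp (MonoidHom.id _) = c.comp (β.comp α) := by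
    rw [← MonoidHom.comp_assoc, hcβ, hρα, MonoidHom.comp_id]
  intro y hy
  rw [Subgroup.mem_inf] at hy
  obtain ⟨hy1, hy2⟩ := hy
  have hd := diffHom_eq_one_of_commutator c (MonoidHom.id _) (β.comp α) hcomp hy2
  simp only [diffHom_apply, MonoidHom.id_apply, MonoidHom.comp_apply] at hd
  rw [← MonoidHom.mem_ker, QuotientGroup.ker_mk'] at hd
  -- `α y` is in `ρ.ker ⊓ commutator`
  have hαy : α y ∈ ρ.ker ⊓ commutator (FreeGroup X) := by
    rw [Subgroup.mem_inf]
    constructor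
    · have := DFunLike.congr_fun hρα y
      simp only [MonoidHom.comp_apply] at this
      simp only [MonoidHom.mem_ker] at hy1 ⊢
      rw [this]; exact hy1
    · have h2 : α y ∈ Subgroup.map α ⁅(⊤ : Subgroup (FreeGroup B)), ⊤⁆ := by
        rw [← _root_.commutator_def]; exact Subgroup.mem_map_of_mem _ hy2
      rw [Subgroup.map_commutator] at h2
      rw [_root_.commutator_def]
      exact Subgroup.commutator_mono le_top le_top h2
  have hβα : β (α y) ∈ (⁅(c.ker : Subgroup (FreeGroup B)), (⊤ : Subgroup (FreeGroup B))⁆ :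
      Subgroup (FreeGroup B)) := by
    refine map_relcomm_le β ρ.ker c.ker ?_ _ (h hαy)
    intro w hw
    have := DFunLike.congr_fun hcβ w
    simp only [MonoidHom.comp_apply] at this
    simp only [MonoidHom.mem_ker] at hw ⊢
    rw [this]; exact hw
  have : y ∈ (⁅(c.ker : Subgroup (FreeGroup B)), (⊤ : Subgroup (FreeGroup B))⁆ :
      Subgroup (FreeGroup B)) := by
    have := mul_mem hd hβα
    simpa using this
  exact this

end Transfer
section Pushout

open Monoid

variable {n : ℕ} {G : Type*} [Group G] (φm : FreeGroup (Fin n) →* G)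

/-- Inclusion of each copy of `FreeGroup G` into `FreeGroup (Bool × G)`. -/
def ιb (b : Bool) : FreeGroup G →* FreeGroup (Bool × G) := FreeGroup.map (fun g => (b, g))

@[simp] lemma ιb_of {b : Bool} {g : G} : ιb b (FreeGroup.of g) = FreeGroup.of (b, g) :=
  FreeGroup.map.of

/-- A lift of `φm` through the canonical presentations. -/
def Wm : FreeGroup (Fin n) →* FreeGroup G := FreeGroup.map (fun a => φm (FreeGroup.of a))

/-- The presentation of the pushout on the generators `Bool × G`. -/
def ρP : FreeGroup (Bool × G) →* Monoid.PushoutI (fun _ : Bool => φm) :=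
  FreeGroup.lift (fun p => Monoid.PushoutI.of (φ := fun _ : Bool => φm) p.1 p.2)

/-- Relators for the presentation `ρP`. -/
def SP : Set (FreeGroup (Bool × G)) :=
  ((⇑(ιb (G := G) false) '' ((freePres G).ker : Set (FreeGroup G))) ∪
    (⇑(ιb (G := G) true) '' ((freePres G).ker : Set (FreeGroup G)))) ∪
  Set.range (fun z : FreeGroup (Fin n) => ιb false (Wm φm z) * (ιb true (Wm φm z))⁻¹)

lemma ρP_ιb (b : Bool) :
    (ρP φm).comp (ιb b) =
      (Monoid.PushoutI.of (φ := fun _ : Bool => φm) b).comp (freePres G) := by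
  apply FreeGroup.ext_hom; intro g
  simp [ρP, ιb, FreeGroup.map.of]

lemma ρP_ιb_apply (b : Bool) (w : FreeGroup G) :
    ρP φm (ιb b w) = Monoid.PushoutI.of (φ := fun _ : Bool => φm) b (freePres G w) :=
  DFunLike.congr_fun (ρP_ιb φm b) w

lemma freePres_Wm : (freePres G).comp (Wm φm) = φm := by
  apply FreeGroup.ext_hom; intro a
  simp [Wm, FreeGroup.map.of]

lemma freePres_Wm_apply (z : FreeGroup (Fin n)) : freePres G (Wm φm z) = φm z :=
  DFunLike.congr_fun (freePres_Wm φm) z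

lemma ρP_surjective : Function.Surjective (ρP φm) := by
  intro p
  induction p using Monoid.PushoutI.induction_on with
  | of i g => exact ⟨FreeGroup.of (i, g), by simp [ρP]⟩
  | base h =>
    refine ⟨ιb false (Wm φm h), ?_⟩
    rw [ρP_ιb_apply, freePres_Wm_apply]
    exact Monoid.PushoutI.of_apply_eq_base _ false h
  | mul x y hx hy =>
    obtain ⟨a, rfl⟩ := hx; obtain ⟨b, rfl⟩ := hy
    exact ⟨a * b, map_mul _ _ _⟩

lemma SP_sub_ker : SP φm ⊆ ((ρP φm).ker : Set (FreeGroup (Bool × G))) := by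
  rintro x ((⟨w, hw, rfl⟩ | ⟨w, hw, rfl⟩) | ⟨z, rfl⟩)
  · simp only [SetLike.mem_coe, MonoidHom.mem_ker]
    rw [ρP_ιb_apply]
    simp only [SetLike.mem_coe, MonoidHom.mem_ker] at hw
    rw [hw, map_one]
  · simp only [SetLike.mem_coe, MonoidHom.mem_ker]
    rw [ρP_ιb_apply]
    simp only [SetLike.mem_coe, MonoidHom.mem_ker] at hw
    rw [hw, map_one]
  · simp only [SetLike.mem_coe, MonoidHom.mem_ker, map_mul, map_inv]
    rw [ρP_ιb_apply, ρP_ιb_apply, freePres_Wm_apply]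
    rw [Monoid.PushoutI.of_apply_eq_base (fun _ : Bool => φm) false z,
      Monoid.PushoutI.of_apply_eq_base (fun _ : Bool => φm) true z]
    exact mul_inv_cancel _

lemma ker_ρP_le : (ρP φm).ker ≤ Subgroup.normalClosure (SP φm) := by
  classical
  set N := Subgroup.normalClosure (SP φm) with hN
  haveI : N.Normal := Subgroup.normalClosure_normal
  set mkN := QuotientGroup.mk' N with hmkN
  have hRI : Function.RightInverse (FreeGroup.of : G → FreeGroup G) (freePres G) :=
    fun g => freePres_of g
  have hkerb : ∀ b : Bool, (freePres G).ker ≤ (mkN.comp (ιb b)).ker := by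
    intro b r hr
    simp only [MonoidHom.mem_ker, MonoidHom.comp_apply, hmkN, QuotientGroup.mk'_apply]
    rw [QuotientGroup.eq_one_iff]
    apply Subgroup.subset_normalClosure
    cases b
    · exact Or.inl (Or.inl ⟨r, hr, rfl⟩)
    · exact Or.inl (Or.inr ⟨r, hr, rfl⟩)
  set gb : ∀ _ : Bool, G →* (FreeGroup (Bool × G)) ⧸ N := fun b =>
    (freePres G).liftOfRightInverse FreeGroup.of hRI ⟨mkN.comp (ιb b), hkerb b⟩ with hgb
  have gb_spec : ∀ (b : Bool) (w : FreeGroup G), gb b (freePres G w) = mkN (ιb b w) := by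
    intro b w
    have := DFunLike.congr_fun
      ((freePres G).liftOfRightInverse_comp FreeGroup.of hRI ⟨mkN.comp (ιb b), hkerb b⟩) w
    simpa only [hgb, MonoidHom.comp_apply] using this
  have hrel : ∀ z : FreeGroup (Fin n), mkN (ιb false (Wm φm z)) = mkN (ιb true (Wm φm z)) := by
    intro z
    have hmem : ιb false (Wm φm z) * (ιb true (Wm φm z))⁻¹ ∈ N :=
      Subgroup.subset_normalClosure (Or.inr ⟨z, rfl⟩)
    have : ιb (G := G) false (Wm φm z) =
        (ιb false (Wm φm z) * (ιb true (Wm φm z))⁻¹) * ιb true (Wm φm z) := by group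
    rw [this, map_mul]
    have h1 : mkN (ιb false (Wm φm z) * (ιb true (Wm φm z))⁻¹) = 1 := by
      rw [hmkN, QuotientGroup.mk'_apply, QuotientGroup.eq_one_iff]
      exact hmem
    rw [h1, one_mul]
  have hbk : ∀ b : Bool, (gb b).comp φm = mkN.comp ((ιb false).comp (Wm φm)) := by
    intro b
    apply FreeGroup.ext_hom; intro a
    simp only [MonoidHom.comp_apply]
    rw [← freePres_Wm_apply φm (FreeGroup.of a), gb_spec]
    cases b
    · rfl
    · exact (hrel (FreeGroup.of a)).symm
  set e' : Monoid.PushoutI (fun _ : Bool => φm) →* (FreeGroup (Bool × G)) ⧸ N :=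
    Monoid.PushoutI.lift gb (mkN.comp ((ιb false).comp (Wm φm))) hbk with he'
  have hcomp : e'.comp (ρP φm) = mkN := by
    apply FreeGroup.ext_hom; rintro ⟨b, g⟩
    simp only [MonoidHom.comp_apply]
    have h1 : ρP φm (FreeGroup.of (b, g)) =
        Monoid.PushoutI.of (φ := fun _ : Bool => φm) b g := by simp [ρP]
    rw [h1, he', Monoid.PushoutI.lift_of]
    have h2 : g = freePres G (FreeGroup.of g) := (freePres_of g).symm
    rw [h2, gb_spec]
    congr 1
    simp [ιb, FreeGroup.map.of]
  intro x hx
  have : mkN x = 1 := by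
    have := DFunLike.congr_fun hcomp x
    simp only [MonoidHom.comp_apply] at this
    rw [← this]
    simp only [MonoidHom.mem_ker] at hx
    rw [hx, map_one]
  rwa [hmkN, QuotientGroup.mk'_apply, QuotientGroup.eq_one_iff] at this

end Pushout
section Detect

variable {G : Type*} [Group G]

/-- Detecting homomorphism for the amalgamation relators. -/
def ABh (G : Type*) [Group G] : FreeGroup (Bool × G) →* Abelianization G :=
  FreeGroup.lift (fun p => cond p.1 1 (Abelianization.of p.2))

/-- Detecting homomorphism for the first copy of the relations of `G`. -/
def BB1h (G : Type*) [Group G] : FreeGroup (Bool × G) →* Abelianization (FreeGroup G) :=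
  FreeGroup.lift (fun p => cond p.1 1 (Abelianization.of (FreeGroup.of p.2)))

/-- Detecting homomorphism for the second copy of the relations of `G`. -/
def BB2h (G : Type*) [Group G] : FreeGroup (Bool × G) →* Abelianization (FreeGroup G) :=
  FreeGroup.lift (fun p => cond p.1 (Abelianization.of (FreeGroup.of p.2)) 1)

lemma ABh_false : (ABh G).comp (ιb false) = (Abelianization.of).comp (freePres G) := by
  apply FreeGroup.ext_hom; intro g; simp [ABh]

lemma ABh_true : (ABh G).comp (ιb true) = 1 := by
  apply FreeGroup.ext_hom; intro g; simp [ABh]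

lemma BB1h_false : (BB1h G).comp (ιb false) = Abelianization.of := by
  apply FreeGroup.ext_hom; intro g; simp [BB1h]

lemma BB1h_true : (BB1h G).comp (ιb true) = 1 := by
  apply FreeGroup.ext_hom; intro g; simp [BB1h]

lemma BB2h_true : (BB2h G).comp (ιb true) = Abelianization.of := by
  apply FreeGroup.ext_hom; intro g; simp [BB2h]

lemma BB2h_false : (BB2h G).comp (ιb false) = 1 := by
  apply FreeGroup.ext_hom; intro g; simp [BB2h]

end Detect
section Heart

open Monoid Pointwise

variable {n : ℕ} {G : Type*} [Group G] (φm : FreeGroup (Fin n) →* G)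

lemma normal_of_le_center {Q : Type*} [Group Q] (M : Subgroup Q) (h : M ≤ Subgroup.center Q) :
    M.Normal := by
  constructor
  intro x hx g
  have := (Subgroup.mem_center_iff.mp (h hx) g).symm
  rw [← this, mul_assoc, mul_inv_cancel, mul_one]
  exact hx

lemma mem_commutator_of_ab_eq_one {H : Type*} [Group H] {z : H}
    (hz : Abelianization.of z = 1) : z ∈ commutator H :=
  (QuotientGroup.eq_one_iff z).mp hz

lemma hom_eq_one_of_commutator {H A : Type*} [Group H] [CommGroup A] (f : H →* A) {x : H}
    (hx : x ∈ commutator H) : f x = 1 :=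
  Abelianization.commutator_subset_ker f hx

lemma ρP_condition :
    (ρP φm).comp ((ιb false).comp (Wm φm)) = (ρP φm).comp ((ιb true).comp (Wm φm)) := by
  apply FreeGroup.ext_hom; intro a
  simp only [MonoidHom.comp_apply]
  rw [ρP_ιb_apply, ρP_ιb_apply, freePres_Wm_apply]
  rw [Monoid.PushoutI.of_apply_eq_base (fun _ : Bool => φm) false (FreeGroup.of a),
    Monoid.PushoutI.of_apply_eq_base (fun _ : Bool => φm) true (FreeGroup.of a)]

lemma ιb_mem_ker (b : Bool) {r : FreeGroup G} (hr : r ∈ (freePres G).ker) :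
    ιb b r ∈ (ρP φm).ker := by
  simp only [MonoidHom.mem_ker] at hr ⊢
  rw [ρP_ιb_apply, hr, map_one]

/-- The key Mayer–Vietoris style computation: the presentation `ρP` of the pushout
is Hopf-trivial. -/
lemma ker_inf_comm_le (hφm1 : Function.Injective (Abelianization.map φm))
    (hG : HopfTrivial G) :
    (ρP φm).ker ⊓ commutator (FreeGroup (Bool × G)) ≤
      ⁅(ρP φm).ker, (⊤ : Subgroup (FreeGroup (Bool × G)))⁆ := by
  classical
  set F := FreeGroup (Bool × G)
  set K' : Subgroup F := ⁅(ρP φm).ker, (⊤ : Subgroup F)⁆ with hK'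
  haveI : K'.Normal := Subgroup.commutator_normal _ _
  set π := QuotientGroup.mk' K' with hπ
  set t := diffHom (ρP φm) ((ιb false).comp (Wm φm)) ((ιb true).comp (Wm φm))
    (ρP_condition φm) with ht
  -- the three central subgroups
  set M1 : Subgroup (F ⧸ K') := Subgroup.map (π.comp (ιb false)) (freePres G).ker with hM1
  set M2 : Subgroup (F ⧸ K') := Subgroup.map (π.comp (ιb true)) (freePres G).ker with hM2
  set M3 : Subgroup (F ⧸ K') := t.range with hM3
  have hM1c : M1 ≤ Subgroup.center (F ⧸ K') := by
    rintro _ ⟨r, hr, rfl⟩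
    rw [Subgroup.mem_center_iff]
    intro q
    exact (central_mk (ρP φm) (ιb_mem_ker φm false hr) q).symm.eq
  have hM2c : M2 ≤ Subgroup.center (F ⧸ K') := by
    rintro _ ⟨r, hr, rfl⟩
    rw [Subgroup.mem_center_iff]
    intro q
    exact (central_mk (ρP φm) (ιb_mem_ker φm true hr) q).symm.eq
  have hM3c : M3 ≤ Subgroup.center (F ⧸ K') := by
    rintro _ ⟨z, rfl⟩
    rw [Subgroup.mem_center_iff]
    intro q
    exact (diffHom_central _ _ _ _ z q).symm.eq
  set M : Subgroup (F ⧸ K') := M1 ⊔ (M2 ⊔ M3) with hM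
  have hMc : M ≤ Subgroup.center (F ⧸ K') :=
    sup_le hM1c (sup_le hM2c hM3c)
  haveI hMnormal : M.Normal := normal_of_le_center M hMc
  haveI : (M2 ⊔ M3).Normal := normal_of_le_center _ (sup_le hM2c hM3c)
  haveI : M3.Normal := normal_of_le_center _ hM3c
  -- the image of the kernel is contained in `M`
  have hkerM : ∀ x ∈ (ρP φm).ker, π x ∈ M := by
    intro x hx
    have hx' : x ∈ Subgroup.normalClosure (SP φm) := ker_ρP_le φm hx
    have : π x ∈ Subgroup.map π (Subgroup.normalClosure (SP φm)) :=
      Subgroup.mem_map_of_mem _ hx'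
    rw [Subgroup.map_normalClosure _ _ (QuotientGroup.mk'_surjective K')] at this
    refine Subgroup.normalClosure_le_normal ?_ this
    rintro _ ⟨y, ((⟨w, hw, rfl⟩ | ⟨w, hw, rfl⟩) | ⟨z, rfl⟩), rfl⟩
    · exact Subgroup.mem_sup_left ⟨w, hw, rfl⟩
    · exact Subgroup.mem_sup_right (Subgroup.mem_sup_left ⟨w, hw, rfl⟩)
    · refine Subgroup.mem_sup_right (Subgroup.mem_sup_right ⟨z, ?_⟩)
      rw [ht]
      simp only [diffHom_apply, MonoidHom.comp_apply]
      rfl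
  have hKle : ∀ (A : Type _) [CommGroup A] (f : F →* A), ∀ x ∈ K', f x = 1 := by
    intro A _ f x hx
    exact hom_eq_one_of_commutator f (Subgroup.commutator_mono le_top le_top hx)
  set ABbar : F ⧸ K' →* Abelianization G :=
    QuotientGroup.lift K' (ABh G) (hKle _ (ABh G)) with hABbar
  set BB1bar : F ⧸ K' →* Abelianization (FreeGroup G) :=
    QuotientGroup.lift K' (BB1h G) (hKle _ (BB1h G)) with hBB1bar
  set BB2bar : F ⧸ K' →* Abelianization (FreeGroup G) :=
    QuotientGroup.lift K' (BB2h G) (hKle _ (BB2h G)) with hBB2bar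
  have hABπ : ∀ x : F, ABbar (π x) = ABh G x := fun x => rfl
  have hBB1π : ∀ x : F, BB1bar (π x) = BB1h G x := fun x => rfl
  have hBB2π : ∀ x : F, BB2bar (π x) = BB2h G x := fun x => rfl
  -- now take an element of the kernel which is a product of commutators
  intro x hx
  rw [Subgroup.mem_inf] at hx
  obtain ⟨hx1, hx2⟩ := hx
  -- decompose `π x`
  have hπx : π x ∈ M := hkerM x hx1
  rw [hM] at hπx
  have hπx' : (π x : F ⧸ K') ∈
      ((M1 : Set (F ⧸ K')) * ((M2 ⊔ M3 : Subgroup (F ⧸ K')) : Set (F ⧸ K'))) := by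
    rw [← Subgroup.mul_normal]
    exact hπx
  obtain ⟨q1, hq1, r, hr, hq1r⟩ := hπx'
  have hr' : r ∈ ((M2 : Set (F ⧸ K')) * ((M3 : Subgroup (F ⧸ K')) : Set (F ⧸ K'))) := by
    rw [← Subgroup.mul_normal]
    exact hr
  obtain ⟨q2, hq2, q3, hq3, hq2q3⟩ := hr'
  obtain ⟨ρ1, hρ1, rfl⟩ := hq1
  obtain ⟨ρ2, hρ2, rfl⟩ := hq2
  obtain ⟨z, rfl⟩ := hq3
  simp only [MonoidHom.comp_apply] at hq1r hq2q3
  -- `x` maps to 1 in every abelian group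
  have hxab : ∀ (A : Type _) [CommGroup A] (f : F ⧸ K' →* A), f (π x) = 1 := by
    intro A _ f
    have h1 : (f.comp π) x = 1 := hom_eq_one_of_commutator (f.comp π) hx2
    simpa using h1
  -- Step 1 : `t z = 1`
  have hABq1 : ABbar (π (ιb false ρ1)) = 1 := by
    rw [hABπ]
    have h1 := DFunLike.congr_fun (ABh_false (G := G)) ρ1
    simp only [MonoidHom.comp_apply] at h1
    rw [h1]
    rw [show freePres G ρ1 = 1 from hρ1, map_one]
  have hABq2 : ABbar (π (ιb true ρ2)) = 1 := by
    rw [hABπ]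
    have h1 := DFunLike.congr_fun (ABh_true (G := G)) ρ2
    simp only [MonoidHom.comp_apply] at h1
    rw [h1]; rfl
  have hABt : ABbar (t z) = Abelianization.map φm (Abelianization.of z) := by
    rw [ht]
    simp only [diffHom_apply, MonoidHom.comp_apply]
    rw [hABπ, map_mul, map_inv]
    have h1 := DFunLike.congr_fun (ABh_false (G := G)) (Wm φm z)
    have h2 := DFunLike.congr_fun (ABh_true (G := G)) (Wm φm z)
    simp only [MonoidHom.comp_apply] at h1 h2
    rw [h1, h2]
    simp only [MonoidHom.one_apply, inv_one, mul_one, MonoidHom.comp_apply]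
    rw [freePres_Wm_apply, Abelianization.map_of]
  have htz1 : t z = 1 := by
    have hprod : ABbar (π x) = 1 := hxab _ ABbar
    rw [← hq1r, ← hq2q3] at hprod
    rw [map_mul, map_mul, hABq1, hABq2, one_mul, one_mul, hABt] at hprod
    have h1 : Abelianization.of z = 1 := by
      apply hφm1
      rw [hprod, map_one]
    exact diffHom_eq_one_of_commutator _ _ _ _ (mem_commutator_of_ab_eq_one h1)
  -- Step 2 : `q1 = 1`
  have hq11 : π (ιb false ρ1) = 1 := by
    have hBBq2 : BB1bar (π (ιb true ρ2)) = 1 := by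
      rw [hBB1π]
      have h1 := DFunLike.congr_fun (BB1h_true (G := G)) ρ2
      simp only [MonoidHom.comp_apply] at h1
      rw [h1]; rfl
    have hprod : BB1bar (π x) = 1 := hxab _ BB1bar
    rw [← hq1r, ← hq2q3] at hprod
    rw [map_mul, map_mul, hBBq2, htz1, map_one, mul_one, mul_one, hBB1π] at hprod
    have h1 := DFunLike.congr_fun (BB1h_false (G := G)) ρ1
    simp only [MonoidHom.comp_apply] at h1
    rw [h1] at hprod
    have hρ1K : ρ1 ∈ (⁅((freePres G).ker : Subgroup (FreeGroup G)),
        (⊤ : Subgroup (FreeGroup G))⁆ : Subgroup (FreeGroup G)) :=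
      hG (Subgroup.mem_inf.mpr ⟨hρ1, mem_commutator_of_ab_eq_one hprod⟩)
    have h2 : ιb (G := G) false ρ1 ∈ K' := by
      rw [hK']
      exact map_relcomm_le (ιb false) (freePres G).ker (ρP φm).ker
        (fun w hw => ιb_mem_ker φm false hw) ρ1 hρ1K
    rw [hπ, QuotientGroup.mk'_apply, QuotientGroup.eq_one_iff]
    exact h2
  -- Step 3 : `q2 = 1`
  have hq21 : π (ιb true ρ2) = 1 := by
    have hBBq1 : BB2bar (π (ιb false ρ1)) = 1 := by
      rw [hBB2π]
      have h1 := DFunLike.congr_fun (BB2h_false (G := G)) ρ1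
      simp only [MonoidHom.comp_apply] at h1
      rw [h1]; rfl
    have hprod : BB2bar (π x) = 1 := hxab _ BB2bar
    rw [← hq1r, ← hq2q3] at hprod
    rw [map_mul, map_mul, hBBq1, htz1, map_one, mul_one, one_mul, hBB2π] at hprod
    have h1 := DFunLike.congr_fun (BB2h_true (G := G)) ρ2
    simp only [MonoidHom.comp_apply] at h1
    rw [h1] at hprod
    have hρ2K : ρ2 ∈ (⁅((freePres G).ker : Subgroup (FreeGroup G)),
        (⊤ : Subgroup (FreeGroup G))⁆ : Subgroup (FreeGroup G)) :=
      hG (Subgroup.mem_inf.mpr ⟨hρ2, mem_commutator_of_ab_eq_one hprod⟩)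
    have h2 : ιb (G := G) true ρ2 ∈ K' := by
      rw [hK']
      exact map_relcomm_le (ιb true) (freePres G).ker (ρP φm).ker
        (fun w hw => ιb_mem_ker φm true hw) ρ2 hρ2K
    rw [hπ, QuotientGroup.mk'_apply, QuotientGroup.eq_one_iff]
    exact h2
  -- conclude
  have hfin : π x = 1 := by
    rw [← hq1r, ← hq2q3, hq11, hq21, htz1, one_mul, one_mul]
  rw [hπ, QuotientGroup.mk'_apply, QuotientGroup.eq_one_iff] at hfin
  exact hfin

/-- `H₂` of the double vanishes. -/
lemma hopfTrivial_pushout (hφm1 : Function.Injective (Abelianization.map φm))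
    (hG : HopfTrivial G) : HopfTrivial (Monoid.PushoutI (fun _ : Bool => φm)) :=
  hopfTrivial_of_presentation (ρP φm) (ρP_surjective φm) (ker_inf_comm_le φm hφm1 hG)

end Heart
section H1

open Monoid

variable {n : ℕ} {G : Type*} [Group G] (φp φm : FreeGroup (Fin n) →* G)

lemma ab_of_surjective {H : Type*} [Group H] :
    Function.Surjective (Abelianization.of : H → Abelianization H) := fun q =>
  QuotientGroup.induction_on q fun p => ⟨p, rfl⟩

lemma ab_map_surj_false
    (hp : Function.Surjective (Abelianization.map φp))
    (hm : Function.Surjective (Abelianization.map φm)) (b : Bool) :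
    Function.Surjective
      (Abelianization.map ((Monoid.PushoutI.of (φ := fun _ : Bool => φm) b).comp φp)) := by
  have hOfMem : ∀ (i : Bool) (g : G),
      Abelianization.of (Monoid.PushoutI.of (φ := fun _ : Bool => φm) i g) ∈
        (Abelianization.map
          ((Monoid.PushoutI.of (φ := fun _ : Bool => φm) b).comp φp)).range := by
    intro i g
    obtain ⟨v, hv⟩ := hm (Abelianization.of g)
    obtain ⟨w, hw⟩ := hp (Abelianization.map φm v)
    have hbase : ∀ j : Bool, Abelianization.of (Monoid.PushoutI.of (φ := fun _ : Bool => φm) i g)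
        = Abelianization.map (Monoid.PushoutI.of (φ := fun _ : Bool => φm) i)
            (Abelianization.of g) := by
      intro _
      rw [Abelianization.map_of]
    refine ⟨w, ?_⟩
    rw [hbase i, ← hv, Abelianization.map_map_apply]
    have hcomm : ∀ j : Bool, (Monoid.PushoutI.of (φ := fun _ : Bool => φm) j).comp φm =
        Monoid.PushoutI.base (fun _ : Bool => φm) := fun j =>
      Monoid.PushoutI.of_comp_eq_base j
    rw [hcomm i, ← hcomm b]
    rw [← Abelianization.map_map_apply, hw, Abelianization.map_map_apply]
  intro q
  obtain ⟨p, rfl⟩ := ab_of_surjective q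
  induction p using Monoid.PushoutI.induction_on with
  | of i g => exact hOfMem i g
  | base h =>
    rw [← Monoid.PushoutI.of_apply_eq_base (fun _ : Bool => φm) false h]
    exact hOfMem false (φm h)
  | mul x y hx hy =>
    obtain ⟨a, ha⟩ := hx; obtain ⟨c, hc⟩ := hy
    exact ⟨a * c, by rw [map_mul, ha, hc, map_mul]⟩

end H1
section FP

open Monoid

variable {n : ℕ} {G : Type*} [Group G]

lemma fp_pushout (φm : FreeGroup (Fin n) →* G) (hGfp : FinitelyPresentable G) :
    FinitelyPresentable (Monoid.PushoutI (fun _ : Bool => φm)) := by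
  classical
  obtain ⟨m, S, ⟨eqv⟩⟩ := hGfp
  set ι1 : FreeGroup (Fin m) →* FreeGroup (Fin m ⊕ Fin m) := FreeGroup.map Sum.inl with hι1
  set ι2 : FreeGroup (Fin m) →* FreeGroup (Fin m ⊕ Fin m) := FreeGroup.map Sum.inr with hι2
  set N0 : Subgroup (FreeGroup (Fin m)) := Subgroup.normalClosure (S : Set _) with hN0
  haveI : N0.Normal := Subgroup.normalClosure_normal
  set q : FreeGroup (Fin m) →* G := eqv.toMonoidHom.comp (QuotientGroup.mk' N0) with hqdef
  have hq_surj : Function.Surjective q :=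
    eqv.surjective.comp (QuotientGroup.mk'_surjective N0)
  choose v hv using fun a : Fin n => hq_surj (φm (FreeGroup.of a))
  set T : Finset (FreeGroup (Fin m ⊕ Fin m)) := S.image ι1 ∪ S.image ι2 ∪
    (Finset.univ : Finset (Fin n)).image (fun a => ι1 (v a) * (ι2 (v a))⁻¹) with hT
  set N : Subgroup (FreeGroup (Fin m ⊕ Fin m)) := Subgroup.normalClosure (T : Set (FreeGroup (Fin m ⊕ Fin m))) with hN
  haveI : N.Normal := Subgroup.normalClosure_normal
  -- the projection to the pushout
  set ρ' : FreeGroup (Fin m ⊕ Fin m) →* Monoid.PushoutI (fun _ : Bool => φm) :=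
    FreeGroup.lift (Sum.elim
      (fun i => Monoid.PushoutI.of (φ := fun _ : Bool => φm) false (q (FreeGroup.of i)))
      (fun i => Monoid.PushoutI.of (φ := fun _ : Bool => φm) true (q (FreeGroup.of i)))) with hρ'
  have hρ'ι1 : ρ'.comp ι1 = (Monoid.PushoutI.of (φ := fun _ : Bool => φm) false).comp q := by
    apply FreeGroup.ext_hom; intro i
    simp only [MonoidHom.comp_apply, hι1]
    rw [FreeGroup.map.of, hρ', FreeGroup.lift_apply_of]
    rfl
  have hρ'ι2 : ρ'.comp ι2 = (Monoid.PushoutI.of (φ := fun _ : Bool => φm) true).comp q := by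
    apply FreeGroup.ext_hom; intro i
    simp only [MonoidHom.comp_apply, hι2]
    rw [FreeGroup.map.of, hρ', FreeGroup.lift_apply_of]
    rfl
  have hqS : ∀ s ∈ S, q s = 1 := by
    intro s hs
    have : (QuotientGroup.mk' N0) s = 1 := by
      rw [QuotientGroup.mk'_apply, QuotientGroup.eq_one_iff]
      exact Subgroup.subset_normalClosure hs
    rw [hqdef, MonoidHom.comp_apply, this, map_one]
  have hTker : (T : Set (FreeGroup (Fin m ⊕ Fin m))) ⊆ (ρ'.ker : Set (FreeGroup (Fin m ⊕ Fin m))) := by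
    intro x hx
    simp only [hT, Finset.coe_union, Set.mem_union, Finset.coe_image, Set.mem_image,
      Finset.mem_coe] at hx
    rcases hx with (⟨s, hs, rfl⟩ | ⟨s, hs, rfl⟩) | ⟨a, _, rfl⟩
    · simp only [SetLike.mem_coe, MonoidHom.mem_ker]
      have := DFunLike.congr_fun hρ'ι1 s
      simp only [MonoidHom.comp_apply] at this
      rw [this, hqS s hs, map_one]
    · simp only [SetLike.mem_coe, MonoidHom.mem_ker]
      have := DFunLike.congr_fun hρ'ι2 s
      simp only [MonoidHom.comp_apply] at this
      rw [this, hqS s hs, map_one]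
    · simp only [SetLike.mem_coe, MonoidHom.mem_ker, map_mul, map_inv]
      have h1 := DFunLike.congr_fun hρ'ι1 (v a)
      have h2 := DFunLike.congr_fun hρ'ι2 (v a)
      simp only [MonoidHom.comp_apply] at h1 h2
      rw [h1, h2, hv a]
      rw [Monoid.PushoutI.of_apply_eq_base (fun _ : Bool => φm) false (FreeGroup.of a),
        Monoid.PushoutI.of_apply_eq_base (fun _ : Bool => φm) true (FreeGroup.of a)]
      exact mul_inv_cancel _
  have hNker : N ≤ ρ'.ker := Subgroup.normalClosure_le_normal hTker
  set e : (FreeGroup (Fin m ⊕ Fin m) ⧸ N) →* Monoid.PushoutI (fun _ : Bool => φm) :=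
    QuotientGroup.lift N ρ' (fun x hx => MonoidHom.mem_ker.mp (hNker hx)) with he
  -- the inverse map
  have hSkerj : ∀ b : Bool, (S : Set (FreeGroup (Fin m))) ⊆
      ((((QuotientGroup.mk' N).comp (if b then ι2 else ι1)).ker : Subgroup _) : Set _) := by
    intro b s hs
    simp only [SetLike.mem_coe, MonoidHom.mem_ker, MonoidHom.comp_apply,
      QuotientGroup.mk'_apply, QuotientGroup.eq_one_iff]
    apply Subgroup.subset_normalClosure
    cases b
    · simp only [hT, Finset.coe_union, Set.mem_union, Finset.coe_image]
      exact Or.inl (Or.inl ⟨s, hs, rfl⟩)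
    · simp only [hT, Finset.coe_union, Set.mem_union, Finset.coe_image]
      exact Or.inl (Or.inr ⟨s, hs, rfl⟩)
  set j : ∀ _ : Bool, (FreeGroup (Fin m) ⧸ N0) →* FreeGroup (Fin m ⊕ Fin m) ⧸ N := fun b =>
    QuotientGroup.lift N0 ((QuotientGroup.mk' N).comp (if b then ι2 else ι1))
      (fun x hx => MonoidHom.mem_ker.mp
        (Subgroup.normalClosure_le_normal (hSkerj b) hx)) with hj
  set g : ∀ _ : Bool, G →* FreeGroup (Fin m ⊕ Fin m) ⧸ N := fun b => (j b).comp eqv.symm.toMonoidHom with hg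
  have hgq : ∀ (b : Bool) (w : FreeGroup (Fin m)),
      g b (q w) = QuotientGroup.mk' N ((if b then ι2 else ι1) w) := by
    intro b w
    rw [hg, hqdef]
    simp only [MonoidHom.comp_apply, MulEquiv.coe_toMonoidHom]
    rw [MulEquiv.symm_apply_apply]
    rfl
  have hrelT : ∀ a : Fin n,
      QuotientGroup.mk' N (ι1 (v a)) = QuotientGroup.mk' N (ι2 (v a)) := by
    intro a
    have hmem : ι1 (v a) * (ι2 (v a))⁻¹ ∈ N := by
      apply Subgroup.subset_normalClosure
      simp only [hT, Finset.coe_union, Set.mem_union, Finset.coe_image, Set.mem_image,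
        Finset.mem_coe]
      exact Or.inr ⟨a, Finset.mem_univ a, rfl⟩
    have hsplit : ι1 (v a) = (ι1 (v a) * (ι2 (v a))⁻¹) * ι2 (v a) := by group
    rw [hsplit, map_mul]
    have h1 : QuotientGroup.mk' N (ι1 (v a) * (ι2 (v a))⁻¹) = 1 := by
      rw [QuotientGroup.mk'_apply, QuotientGroup.eq_one_iff]
      exact hmem
    rw [h1, one_mul]
  set k' : FreeGroup (Fin n) →* FreeGroup (Fin m ⊕ Fin m) ⧸ N :=
    (QuotientGroup.mk' N).comp (FreeGroup.lift (fun a => ι1 (v a))) with hk'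
  have hcond : ∀ b : Bool, (g b).comp φm = k' := by
    intro b
    apply FreeGroup.ext_hom; intro a
    simp only [MonoidHom.comp_apply]
    rw [← hv a, hgq b]
    cases b
    · simp [hk']
    · simp only [if_true]
      rw [← hrelT a]
      simp [hk']
  set e' : Monoid.PushoutI (fun _ : Bool => φm) →* FreeGroup (Fin m ⊕ Fin m) ⧸ N :=
    Monoid.PushoutI.lift g k' hcond with he'
  -- mutual inverses
  have hgenl : ∀ i : Fin m, e' (e (QuotientGroup.mk (FreeGroup.of (Sum.inl i)))) =
      QuotientGroup.mk (FreeGroup.of (Sum.inl i)) := by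
    intro i
    have h0 : e (QuotientGroup.mk (FreeGroup.of (Sum.inl i))) =
        ρ' (FreeGroup.of (Sum.inl i)) := rfl
    rw [h0, hρ', FreeGroup.lift_apply_of]
    have h1 : (Sum.elim
        (fun i => Monoid.PushoutI.of (φ := fun _ : Bool => φm) false (q (FreeGroup.of i)))
        (fun i => Monoid.PushoutI.of (φ := fun _ : Bool => φm) true (q (FreeGroup.of i)))
        (Sum.inl i)) = Monoid.PushoutI.of (φ := fun _ : Bool => φm) false (q (FreeGroup.of i)) :=
      rfl
    rw [h1, he', Monoid.PushoutI.lift_of, hgq false]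
    have hif : (if false = true then ι2 else ι1) = ι1 := rfl
    rw [hif, hι1, FreeGroup.map.of]
    rfl
  have hgenr : ∀ i : Fin m, e' (e (QuotientGroup.mk (FreeGroup.of (Sum.inr i)))) =
      QuotientGroup.mk (FreeGroup.of (Sum.inr i)) := by
    intro i
    have h0 : e (QuotientGroup.mk (FreeGroup.of (Sum.inr i))) =
        ρ' (FreeGroup.of (Sum.inr i)) := rfl
    rw [h0, hρ', FreeGroup.lift_apply_of]
    have h1 : (Sum.elim
        (fun i => Monoid.PushoutI.of (φ := fun _ : Bool => φm) false (q (FreeGroup.of i)))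
        (fun i => Monoid.PushoutI.of (φ := fun _ : Bool => φm) true (q (FreeGroup.of i)))
        (Sum.inr i)) = Monoid.PushoutI.of (φ := fun _ : Bool => φm) true (q (FreeGroup.of i)) :=
      rfl
    rw [h1, he', Monoid.PushoutI.lift_of, hgq true]
    have hif : (if true = true then ι2 else ι1) = ι2 := rfl
    rw [hif, hι2, FreeGroup.map.of]
    rfl
  have hee' : e'.comp e = MonoidHom.id _ := by
    rw [← MonoidHom.cancel_right (QuotientGroup.mk'_surjective N)]
    apply FreeGroup.ext_hom
    rintro (i | i)
    · simpa only [MonoidHom.comp_apply, MonoidHom.id_apply, QuotientGroup.mk'_apply]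
        using hgenl i
    · simpa only [MonoidHom.comp_apply, MonoidHom.id_apply, QuotientGroup.mk'_apply]
        using hgenr i
  have he'e : e.comp e' = MonoidHom.id _ := by
    apply Monoid.PushoutI.hom_ext_nonempty
    intro b
    rw [MonoidHom.comp_assoc]
    have h1 : e'.comp (Monoid.PushoutI.of (φ := fun _ : Bool => φm) b) = g b := by
      apply MonoidHom.ext; intro x
      rw [he', MonoidHom.comp_apply, Monoid.PushoutI.lift_of]
    rw [h1]
    rw [← MonoidHom.cancel_right (show Function.Surjective q from hq_surj)]
    apply FreeGroup.ext_hom; intro i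
    simp only [MonoidHom.comp_apply, MonoidHom.id_apply]
    rw [hgq b]
    cases b
    · have := DFunLike.congr_fun hρ'ι1 (FreeGroup.of i)
      simp only [MonoidHom.comp_apply] at this
      have h2 : e (QuotientGroup.mk' N (ι1 (FreeGroup.of i))) = ρ' (ι1 (FreeGroup.of i)) := rfl
      have hif : (if false = true then ι2 else ι1) = ι1 := rfl
      rw [hif, h2, this]
    · have := DFunLike.congr_fun hρ'ι2 (FreeGroup.of i)
      simp only [MonoidHom.comp_apply] at this
      have h2 : e (QuotientGroup.mk' N (ι2 (FreeGroup.of i))) = ρ' (ι2 (FreeGroup.of i)) := rfl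
      have hif : (if true = true then ι2 else ι1) = ι2 := rfl
      rw [hif, h2, this]
  set bigE : (FreeGroup (Fin m ⊕ Fin m) ⧸ N) ≃* Monoid.PushoutI (fun _ : Bool => φm) :=
    MonoidHom.toMulEquiv e e' hee' he'e with hbigE
  -- transport to `Fin (m + m)`
  set fgc : FreeGroup (Fin m ⊕ Fin m) ≃* FreeGroup (Fin (m + m)) := FreeGroup.freeGroupCongr finSumFinEquiv with hfgc
  set S' : Finset (FreeGroup (Fin (m + m))) := T.image fgc with hS'
  have hmapN : Subgroup.map fgc.toMonoidHom N = Subgroup.normalClosure (S' : Set _) := by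
    have hsurj2 : Function.Surjective
        (fgc.toMonoidHom : FreeGroup (Fin m ⊕ Fin m) →* FreeGroup (Fin (m + m))) :=
      fgc.surjective
    rw [hN, Subgroup.map_normalClosure _ fgc.toMonoidHom hsurj2]
    congr 1
    rw [hS', Finset.coe_image]
    rfl
  refine ⟨m + m, S', ⟨MulEquiv.trans (QuotientGroup.congr N _ fgc hmapN).symm bigE⟩⟩

end FP

/-- In the group `B_n` of homology-cobordism classes of triples `(G, φ₊, φ₋)`
(`G` finitely presentable, `φ± : F_n → G` 2-connected), the inverse of the
class of `(G, φ₊, φ₋)` is the class of `(G, φ₋, φ₊)`.  Explicitly, the product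
`(G, φ₊, φ₋)·(G, φ₋, φ₊) = (G ∗_{F_n} G, inl∘φ₊, inr∘φ₊)` (amalgamated over
`φ₋` on both factors) is an element of `A_n`, and the fold map
`id ∗_{F_n} id : G ∗_{F_n} G → G` together with `φ₊ : F_n → G` is a homology
cobordism between it and the identity `(F_n, id, id)`: the fold map is
2-connected and the relevant square commutes. -/
theorem inverse_in_Bn (n : ℕ) (G : Type*) [Group G] (hGfp : FinitelyPresentable G)
    (φp φm : FreeGroup (Fin n) →* G)
    (hφp : TwoConnected φp) (hφm : TwoConnected φm) :
    ∀ fold : Monoid.PushoutI (fun _ : Bool => φm) →* G,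
      fold = Monoid.PushoutI.lift (fun _ => MonoidHom.id G) φm (fun _ => rfl) →
      -- the product triple is a genuine element of `A_n`
      (FinitelyPresentable (Monoid.PushoutI (fun _ : Bool => φm)) ∧
        TwoConnected ((Monoid.PushoutI.of (φ := fun _ : Bool => φm) false).comp φp) ∧
        TwoConnected ((Monoid.PushoutI.of (φ := fun _ : Bool => φm) true).comp φp)) ∧
      -- the fold map is 2-connected, and with `φ₊` it is a homology cobordism
      -- from the product triple to the identity triple `(F_n, id, id)`
      TwoConnected fold ∧
      fold.comp ((Monoid.PushoutI.of (φ := fun _ : Bool => φm) false).comp φp) = φp ∧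
      fold.comp ((Monoid.PushoutI.of (φ := fun _ : Bool => φm) true).comp φp) = φp ∧
      φp.comp (MonoidHom.id (FreeGroup (Fin n))) = φp := by
  intro fold hfold
  have hG : HopfTrivial G := hopfTrivial_of_h2surj φp hφp.2
  have hP : HopfTrivial (Monoid.PushoutI (fun _ : Bool => φm)) :=
    hopfTrivial_pushout φm hφm.1.injective hG
  have hfold_of : ∀ b : Bool,
      fold.comp (Monoid.PushoutI.of (φ := fun _ : Bool => φm) b) = MonoidHom.id G := by
    intro b
    subst hfold
    apply MonoidHom.ext; intro g
    rw [MonoidHom.comp_apply, Monoid.PushoutI.lift_of]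
  have hcompb : ∀ b : Bool,
      fold.comp ((Monoid.PushoutI.of (φ := fun _ : Bool => φm) b).comp φp) = φp := by
    intro b
    rw [← MonoidHom.comp_assoc, hfold_of b, MonoidHom.id_comp]
  have heq : ∀ b : Bool, ⇑(Abelianization.map φp) = ⇑(Abelianization.map fold) ∘
      ⇑(Abelianization.map
        ((Monoid.PushoutI.of (φ := fun _ : Bool => φm) b).comp φp)) := by
    intro b
    have h1 := Abelianization.map_comp
      ((Monoid.PushoutI.of (φ := fun _ : Bool => φm) b).comp φp) fold
    rw [hcompb b] at h1
    funext x
    rw [← h1]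
    rfl
  have hsurjb : ∀ b : Bool, Function.Surjective (Abelianization.map
      ((Monoid.PushoutI.of (φ := fun _ : Bool => φm) b).comp φp)) := fun b =>
    ab_map_surj_false φp φm hφp.1.surjective hφm.1.surjective b
  have hinjb : ∀ b : Bool, Function.Injective (Abelianization.map
      ((Monoid.PushoutI.of (φ := fun _ : Bool => φm) b).comp φp)) := by
    intro b
    have := hφp.1.injective
    rw [heq b] at this
    exact Function.Injective.of_comp this
  have hfoldsurj : Function.Surjective (Abelianization.map fold) := by
    have := hφp.1.surjective
    rw [heq false] at this
    exact Function.Surjective.of_comp this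
  have hfoldinj : Function.Injective (Abelianization.map fold) := by
    intro x y hxy
    obtain ⟨a, rfl⟩ := hsurjb false x
    obtain ⟨c, rfl⟩ := hsurjb false y
    have h2 : Abelianization.map φp a = Abelianization.map φp c := by
      rw [heq false]
      exact hxy
    rw [hφp.1.injective h2]
  refine ⟨⟨fp_pushout φm hGfp, ⟨⟨hinjb false, hsurjb false⟩, h2surj_of_hopfTrivial _ hP⟩,
      ⟨⟨hinjb true, hsurjb true⟩, h2surj_of_hopfTrivial _ hP⟩⟩,
    ⟨⟨hfoldinj, hfoldsurj⟩, h2surj_of_split fold (Monoid.PushoutI.of (φ := fun _ : Bool => φm) false) (hfold_of false)⟩,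
    hcompb false, hcompb true, MonoidHom.comp_id φp⟩
end

section
/- Let G be a finitely generated group and H a finitely presentable group, and let f : G → H be 2-connected (isomorphism on H₁, surjection on H₂). Then the induced map f^acy : G^acy → H^acy between acyclic closures is an isomorphism. In particular, for a homology cylinder (M, i₊, i₋) over Σ_{g,1}, both induced maps i±^acy : (F_{2g})^acy → (π₁M)^acy are isomorphisms, so σ^acy(M) := (i₊^acy)⁻¹ ∘ i₋^acy is an automorphism of (F_{2g})^acy. -/
open Monoid

/-- `(C, ι)` is an acyclic closure of `G`: `C` is acyclically closed and `ι`
is universal among homomorphisms from `G` to acyclically closed groups. -/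
def IsAcyclicClosure {G : Type u} [Group G] (C : Type u) [Group C] (ι : G →* C) : Prop :=
  AcyclicallyClosed C ∧
    ∀ (A : Type u) [Group A], AcyclicallyClosed A →
      ∀ f : G →* A, ∃! f' : C →* A, f'.comp ι = f

open scoped commutatorElement

section Lemmas

variable {G A : Type*} [Group G] [Group A] {n : ℕ}

/-- A hom into a commutative group kills the commutator subgroup. -/
theorem comm_hom_eq_one {B : Type*} [CommGroup B] (φ : G →* B) {x : G}
    (hx : x ∈ commutator G) : φ x = 1 :=
  Abelianization.commutator_subset_ker φ hx

theorem acyProj_inl (g : G) : acyProj G n (Coprod.inl g) = 1 := by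
  simp [acyProj]

theorem acyProj_inr_of (j : Fin n) :
    acyProj G n (Coprod.inr (FreeGroup.of j)) = Abelianization.of (FreeGroup.of j) := by
  simp [acyProj]

theorem acyProj_commutator (x y : Coprod G (FreeGroup (Fin n))) :
    acyProj G n ⁅x, y⁆ = 1 := by
  rw [map_commutatorElement]
  exact commutatorElement_eq_one_iff_commute.2 (Commute.all _ _)

theorem acyProj_mem_commutator {x : Coprod G (FreeGroup (Fin n))}
    (hx : x ∈ commutator (Coprod G (FreeGroup (Fin n)))) : acyProj G n x = 1 :=
  comm_hom_eq_one _ hx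

/-- Naturality of `acyProj`. -/
theorem acyProj_map_s19 (ψ : G →* A) :
    (acyProj A n).comp (Coprod.map ψ (MonoidHom.id _)) = acyProj G n := by
  apply Coprod.hom_ext
  · ext g
    simp [acyProj]
  · ext j
    simp [acyProj]

theorem acyProj_map_apply (ψ : G →* A) (x : Coprod G (FreeGroup (Fin n))) :
    acyProj A n (Coprod.map ψ (MonoidHom.id _) x) = acyProj G n x :=
  DFunLike.congr_fun (acyProj_map_s19 ψ) x

/-- `Coprod.lift ρ (FreeGroup.lift a)` as evaluation after pushing coefficients. -/
theorem lift_eq_eval_map (ρ : G →* A) (a : Fin n → A) :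
    Coprod.lift ρ (FreeGroup.lift a) =
      (acyEval a).comp (Coprod.map ρ (MonoidHom.id _)) := by
  apply Coprod.hom_ext
  · ext g
    simp [acyEval]
  · ext j
    simp [acyEval]

/-- Naturality of evaluation. -/
theorem eval_map (ψ : G →* A) (g : Fin n → G) :
    ψ.comp (acyEval g) = (acyEval (fun i => ψ (g i))).comp (Coprod.map ψ (MonoidHom.id _)) := by
  apply Coprod.hom_ext
  · ext x
    simp [acyEval]
  · ext j
    simp [acyEval]

theorem eval_map_apply (ψ : G →* A) (g : Fin n → G) (x : Coprod G (FreeGroup (Fin n))) :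
    ψ (acyEval g x) = acyEval (fun i => ψ (g i)) (Coprod.map ψ (MonoidHom.id _) x) :=
  DFunLike.congr_fun (eval_map ψ g) x

theorem acyEval_inl {g : Fin n → G} (x : G) : acyEval g (Coprod.inl x) = x := by
  simp [acyEval]

theorem acyEval_inr_of {g : Fin n → G} (j : Fin n) :
    acyEval g (Coprod.inr (FreeGroup.of j)) = g j := by
  simp [acyEval]

end Lemmas

section SolutionKill

variable {Γ A : Type*} [Group Γ] [Group A]

/-- Every element of the normal closure of the `k t` can be written as a word
which evaluates to it at `z := k` and to `1` at `z := 1`. -/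
theorem exists_word_of_mem_normalClosure {s : ℕ} (k : Fin s → Γ) {κ : Γ}
    (hκ : κ ∈ Subgroup.normalClosure (Set.range k)) :
    ∃ u : Coprod Γ (FreeGroup (Fin s)),
      acyEval k u = κ ∧ acyEval (fun _ => (1 : Γ)) u = 1 := by
  refine Subgroup.closure_induction ?_ ⟨1, by simp, by simp⟩
    (fun x y _ _ ⟨u₁, h₁, h₁'⟩ ⟨u₂, h₂, h₂'⟩ =>
      ⟨u₁ * u₂, by simp [h₁, h₂], by simp [h₁', h₂']⟩)
    (fun x _ ⟨u, h, h'⟩ => ⟨u⁻¹, by simp [h], by simp [h']⟩) hκ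
  intro x hx
  rcases Group.mem_conjugatesOfSet_iff.1 hx with ⟨a, ⟨j, rfl⟩, hconj⟩
  rcases isConj_iff.1 hconj with ⟨g, rfl⟩
  refine ⟨Coprod.inl g * Coprod.inr (FreeGroup.of j) * Coprod.inl g⁻¹, ?_, ?_⟩
  · simp [acyEval]
  · simp [acyEval]

/-- Every element of `⁅KT, ⊤⁆` (KT the normal closure of the `k t`) can be
written as an acyclic word evaluating to it at `z := k` and to `1` at `z := 1`. -/
theorem exists_acyclic_word_of_mem_commutator {s : ℕ} (k : Fin s → Γ) {d : Γ}
    (hd : d ∈ ⁅Subgroup.normalClosure (Set.range k), (⊤ : Subgroup Γ)⁆) :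
    ∃ v : Coprod Γ (FreeGroup (Fin s)),
      acyProj Γ s v = 1 ∧ acyEval k v = d ∧ acyEval (fun _ => (1 : Γ)) v = 1 := by
  rw [Subgroup.commutator_def] at hd
  refine Subgroup.closure_induction ?_ ⟨1, by simp, by simp, by simp⟩
    (fun x y _ _ ⟨v₁, hp₁, h₁, h₁'⟩ ⟨v₂, hp₂, h₂, h₂'⟩ =>
      ⟨v₁ * v₂, by simp [hp₁, hp₂], by simp [h₁, h₂], by simp [h₁', h₂']⟩)
    (fun x _ ⟨v, hp, h, h'⟩ => ⟨v⁻¹, by simp [hp], by simp [h], by simp [h']⟩) hd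
  rintro x ⟨κ, hκ, γ, -, rfl⟩
  obtain ⟨u, hu, hu'⟩ := exists_word_of_mem_normalClosure k hκ
  refine ⟨⁅u, Coprod.inl γ⁆, acyProj_commutator _ _, ?_, ?_⟩
  · rw [map_commutatorElement, hu, acyEval_inl]
  · rw [map_commutatorElement, hu', acyEval_inl]
    simp [commutatorElement_def]

/-- The crucial use of acyclic closedness: a hom `ψ` killing `N` kills normal
generators `k t` of `KT` as soon as each of them splits as an element of
`⁅KT, ⊤⁆` times an element of `N`. -/
theorem solution_kill (hA : AcyclicallyClosed A) (ψ : Γ →* A) {s : ℕ} (k : Fin s → Γ)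
    {N : Subgroup Γ} (hN : ∀ n ∈ N, ψ n = 1)
    (hsplit : ∀ t, ∃ d ∈ ⁅Subgroup.normalClosure (Set.range k), (⊤ : Subgroup Γ)⁆,
      ∃ n ∈ N, k t = d * n) :
    ∀ t, ψ (k t) = 1 := by
  classical
  choose d hd n hn hkdn using hsplit
  choose v hv1 hv2 hv3 using fun t => exists_acyclic_word_of_mem_commutator k (hd t)
  -- the word over Γ
  let What : Fin s → Coprod Γ (FreeGroup (Fin s)) := fun t => v t * Coprod.inl (n t)
  -- push the system to A
  let W : Fin s → Coprod A (FreeGroup (Fin s)) :=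
    fun t => Coprod.map ψ (MonoidHom.id _) (What t)
  have hWacy : IsAcyclicSystem W := by
    intro t
    rw [acyProj_map_apply]
    simp [What, hv1 t, acyProj_inl]
  obtain ⟨g₀, -, hguniq⟩ := hA s W hWacy
  have hsol1 : IsSolution W (fun t => ψ (k t)) := by
    intro t
    rw [← eval_map_apply]
    simp [What, hv2 t, acyEval_inl, ← hkdn t]
  have hsol2 : IsSolution W (fun _ => (1 : A)) := by
    intro t
    have h1 : acyEval (fun i => ψ ((fun _ => (1:Γ)) i)) (W t) = ψ (acyEval (fun _ => (1:Γ)) (What t)) :=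
      (eval_map_apply ψ _ _).symm
    have h2 : acyEval (fun _ => (1:A)) (W t) = ψ (acyEval (fun _ => (1:Γ)) (What t)) := by
      simpa using h1
    rw [h2]
    simp [What, hv3 t, acyEval_inl, hN (n t) (hn t)]
  have := (hguniq _ hsol1).trans (hguniq _ hsol2).symm
  intro t
  exact congrFun this t

section Central

variable {Q : Type*} [Group Q]

theorem central_commutator_left {z x y : Q} (hz : ∀ g, Commute z g) :
    ⁅z * x, y⁆ = ⁅x, y⁆ := by
  have h2 : x * y * x⁻¹ * z⁻¹ = z⁻¹ * (x * y * x⁻¹) := ((hz (x * y * x⁻¹)).inv_left.eq).symm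
  calc ⁅z * x, y⁆ = z * (x * y * x⁻¹ * z⁻¹) * y⁻¹ := by
        rw [commutatorElement_def]; group
    _ = z * (z⁻¹ * (x * y * x⁻¹)) * y⁻¹ := by rw [h2]
    _ = ⁅x, y⁆ := by rw [commutatorElement_def]; group

theorem central_commutator_right {z x y : Q} (hz : ∀ g, Commute z g) :
    ⁅x, z * y⁆ = ⁅x, y⁆ := by
  have h1 : x * z = z * x := ((hz x).eq).symm
  have h2 : ⁅x, y⁆ * z = z * ⁅x, y⁆ := ((hz ⁅x, y⁆).eq).symm
  calc ⁅x, z * y⁆ = (x * z) * (y * x⁻¹ * y⁻¹) * z⁻¹ := by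
        rw [commutatorElement_def]; group
    _ = (z * x) * (y * x⁻¹ * y⁻¹) * z⁻¹ := by rw [h1]
    _ = (z * ⁅x, y⁆) * z⁻¹ := by rw [commutatorElement_def]; group
    _ = (⁅x, y⁆ * z) * z⁻¹ := by rw [h2]
    _ = ⁅x, y⁆ := by group

theorem central_commutator_congr {x y x' y' : Q}
    (hx : ∀ g, Commute (x' * x⁻¹) g) (hy : ∀ g, Commute (y' * y⁻¹) g) :
    ⁅x', y'⁆ = ⁅x, y⁆ := by
  have e1 : x' = (x' * x⁻¹) * x := by group
  have e2 : y' = (y' * y⁻¹) * y := by group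
  calc ⁅x', y'⁆ = ⁅(x' * x⁻¹) * x, (y' * y⁻¹) * y⁆ := by rw [← e1, ← e2]
    _ = ⁅x, y⁆ := by rw [central_commutator_left hx, central_commutator_right hy]

end Central

section Key1

variable {G H : Type*} [Group G] [Group H]

theorem key1 {f : G →* H} (hf : TwoConnected f)
    {m : ℕ} {c : Fin m → H} (hc : ∀ j, c j ∈ commutator H)
    {w : Fin m → Coprod G (FreeGroup (Fin m))}
    (hwcomm : ∀ j, w j ∈ commutator (Coprod G (FreeGroup (Fin m))))
    (hwπ : ∀ j, Coprod.lift f (FreeGroup.lift c) (w j) = c j)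
    (hπsurj : Function.Surjective (Coprod.lift f (FreeGroup.lift c))) :
    ∀ k ∈ (Coprod.lift f (FreeGroup.lift c)).ker,
      ∃ d ∈ ⁅(Coprod.lift f (FreeGroup.lift c)).ker,
            (⊤ : Subgroup (Coprod G (FreeGroup (Fin m))))⁆,
        ∃ n ∈ Subgroup.normalClosure
            (Set.range (fun j => Coprod.inr (FreeGroup.of j) * (w j)⁻¹)),
          k = d * n := by
  intro k hk
  set π : Coprod G (FreeGroup (Fin m)) →* H := Coprod.lift f (FreeGroup.lift c) with hπdef
  set N : Subgroup (Coprod G (FreeGroup (Fin m))) :=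
    Subgroup.normalClosure (Set.range fun j => Coprod.inr (FreeGroup.of j) * (w j)⁻¹) with hNdef
  have hNker : N ≤ π.ker := by
    apply Subgroup.normalClosure_le_normal
    rintro x ⟨j, rfl⟩
    have h1 : π (Coprod.inr (FreeGroup.of j)) = c j := by simp [hπdef]
    simp [MonoidHom.mem_ker, h1, hwπ j]
  -- the `H₁`-projection to `Ab G` killing the variables
  set alpha : Coprod G (FreeGroup (Fin m)) →* Abelianization G :=
    Coprod.lift Abelianization.of 1 with halphadef
  have hAbId : (Abelianization.map f).comp alpha =
      (Abelianization.of (G := H)).comp π := by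
    apply Coprod.hom_ext
    · ext g
      simp [halphadef, hπdef]
    · apply FreeGroup.ext_hom
      intro j
      have h1 : Abelianization.of (c j) = 1 := (QuotientGroup.eq_one_iff _).2 (hc j)
      simp [halphadef, hπdef, h1]
  have hαker : ∀ x ∈ π.ker, alpha x = 1 := by
    intro x hx
    apply hf.1.injective
    have h1 := DFunLike.congr_fun hAbId x
    simp only [MonoidHom.comp_apply] at h1
    rw [map_one, h1, MonoidHom.mem_ker.1 hx, map_one]
  -- E3 : realizing any variable-abelianization by an element of N
  have hNfill : ∀ ab : Abelianization (FreeGroup (Fin m)),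
      ∃ n ∈ N, acyProj G m n = ab ∧ alpha n = 1 := by
    intro ab
    have hsur : Function.Surjective
        (Abelianization.of : FreeGroup (Fin m) → Abelianization (FreeGroup (Fin m))) :=
      fun y => QuotientGroup.mk_surjective y
    have hab : ab ∈ Subgroup.closure
        (Set.range fun j : Fin m => Abelianization.of (FreeGroup.of j)) := by
      obtain ⟨u, rfl⟩ := hsur ab
      have hu : u ∈ Subgroup.closure (Set.range (FreeGroup.of : Fin m → _)) := by
        rw [FreeGroup.closure_range_of]; trivial
      refine Subgroup.closure_induction ?_ (by simpa using one_mem _)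
        (fun x y _ _ hx hy => by rw [map_mul]; exact mul_mem hx hy)
        (fun x _ hx => by rw [map_inv]; exact inv_mem hx) hu
      rintro x ⟨j, rfl⟩
      exact Subgroup.subset_closure ⟨j, rfl⟩
    refine Subgroup.closure_induction ?_ ⟨1, one_mem _, by simp, by simp⟩
      (fun x y _ _ ⟨n₁, h₁, h₁', h₁''⟩ ⟨n₂, h₂, h₂', h₂''⟩ =>
        ⟨n₁ * n₂, mul_mem h₁ h₂, by simp [h₁', h₂'], by simp [h₁'', h₂'']⟩)
      (fun x _ ⟨n, h, h', h''⟩ => ⟨n⁻¹, inv_mem h, by simp [h'], by simp [h'']⟩) hab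
    rintro x ⟨j, rfl⟩
    refine ⟨Coprod.inr (FreeGroup.of j) * (w j)⁻¹,
      Subgroup.subset_normalClosure ⟨j, rfl⟩, ?_, ?_⟩
    · rw [map_mul, map_inv, acyProj_inr_of, acyProj_mem_commutator (hwcomm j)]
      simp
    · have h1 : alpha (Coprod.inr (FreeGroup.of j)) = 1 := by simp [halphadef]
      have h2 : alpha (w j) = 1 := comm_hom_eq_one alpha (hwcomm j)
      rw [map_mul, map_inv, h1, h2]
      simp
  -- correct k by an element of N
  obtain ⟨n₀, hn₀N, hn₀proj, hn₀alpha⟩ := hNfill (acyProj G m k)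
  set k' := k * n₀⁻¹ with hk'def
  have hk'ker : k' ∈ π.ker := mul_mem hk (inv_mem (hNker hn₀N))
  have hk'comm : k' ∈ commutator (Coprod G (FreeGroup (Fin m))) := by
    have hα : alpha k' = 1 := by
      rw [hk'def, map_mul, map_inv, hαker k hk, hn₀alpha]; simp
    have hη : acyProj G m k' = 1 := by
      rw [hk'def, map_mul, map_inv, hn₀proj]; simp
    have hq : (Abelianization.of : _ →* Abelianization (Coprod G (FreeGroup (Fin m)))) =
        ((Abelianization.map Coprod.inl).comp alpha) *
          ((Abelianization.map Coprod.inr).comp (acyProj G m)) := by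
      apply Coprod.hom_ext
      · ext g
        simp [halphadef, acyProj]
      · apply FreeGroup.ext_hom
        intro j
        simp [halphadef, acyProj]
    have h2 := DFunLike.congr_fun hq k'
    simp only [MonoidHom.mul_apply, MonoidHom.comp_apply] at h2
    rw [hα, hη, map_one, map_one, mul_one] at h2
    exact (QuotientGroup.eq_one_iff k').1 h2
  -- the commutator subgroup ⁅ker π, ⊤⁆ and the quotient by it
  set C : Subgroup (Coprod G (FreeGroup (Fin m))) := ⁅π.ker, ⊤⁆ with hCdef
  have hCN : C.Normal := Subgroup.commutator_normal _ _
  have hCker : C ≤ π.ker := Subgroup.commutator_le_left _ _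
  set mkc : Coprod G (FreeGroup (Fin m)) →* (Coprod G (FreeGroup (Fin m))) ⧸ C :=
    QuotientGroup.mk' C with hmkcdef
  have hmkc1 : ∀ x, mkc x = 1 ↔ x ∈ C := fun x => QuotientGroup.eq_one_iff x
  have hcentral : ∀ κ ∈ π.ker, ∀ q, Commute (mkc κ) q := by
    intro κ hκ q
    obtain ⟨γ, rfl⟩ := QuotientGroup.mk'_surjective C q
    have h1 : ⁅κ, γ⁆ ∈ C := Subgroup.commutator_mem_commutator hκ (Subgroup.mem_top γ)
    have h2 : ⁅mkc κ, mkc γ⁆ = 1 := by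
      rw [← map_commutatorElement]
      exact (hmkc1 _).2 h1
    exact commutatorElement_eq_one_iff_commute.1 h2
  have hcentral' : ∀ a b : Coprod G (FreeGroup (Fin m)), a * b⁻¹ ∈ π.ker →
      ∀ q, Commute (mkc a * (mkc b)⁻¹) q := by
    intro a b hab q
    have h1 : mkc a * (mkc b)⁻¹ = mkc (a * b⁻¹) := by rw [map_mul, map_inv]
    rw [h1]
    exact hcentral _ hab q
  -- a set-theoretic section of π
  set σ : H → Coprod G (FreeGroup (Fin m)) := Function.surjInv hπsurj with hσdef
  have hσ : ∀ x, π (σ x) = x := fun x => Function.surjInv_eq hπsurj x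
  set Sg : FreeGroup H →* Coprod G (FreeGroup (Fin m)) := FreeGroup.lift σ with hSgdef
  have hpiSg : ∀ y, π (Sg y) = freePres H y := by
    have : π.comp Sg = freePres H := by
      apply FreeGroup.ext_hom
      intro a
      simp [hSgdef, freePres, hσ]
    exact fun y => DFunLike.congr_fun this y
  -- F1 : rewriting an element of the commutator subgroup as Sg of a commutator word
  have hF1 : ∀ x ∈ commutator (Coprod G (FreeGroup (Fin m))),
      ∃ yh ∈ commutator (FreeGroup H), mkc (Sg yh) = mkc x := by
    intro x hx
    rw [commutator_eq_closure] at hx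
    refine Subgroup.closure_induction ?_ ⟨1, one_mem _, by simp⟩
      (fun x y _ _ ⟨y₁, h₁, h₁'⟩ ⟨y₂, h₂, h₂'⟩ =>
        ⟨y₁ * y₂, mul_mem h₁ h₂, by rw [map_mul, map_mul, map_mul, h₁', h₂']⟩)
      (fun x _ ⟨y₁, h₁, h₁'⟩ =>
        ⟨y₁⁻¹, inv_mem h₁, by rw [map_inv, map_inv, map_inv, h₁']⟩) hx
    rintro x ⟨p, q, rfl⟩
    refine ⟨⁅FreeGroup.of (π p), FreeGroup.of (π q)⁆,
      Subgroup.commutator_mem_commutator (Subgroup.mem_top _) (Subgroup.mem_top _), ?_⟩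
    have h1 : Sg ⁅FreeGroup.of (π p), FreeGroup.of (π q)⁆ = ⁅σ (π p), σ (π q)⁆ := by
      rw [map_commutatorElement]
      simp [hSgdef]
    rw [h1, map_commutatorElement, map_commutatorElement]
    apply central_commutator_congr
    · exact hcentral' _ _ (by simp [MonoidHom.mem_ker, hσ])
    · exact hcentral' _ _ (by simp [MonoidHom.mem_ker, hσ])
  obtain ⟨yh, hyhcomm, hyhmk⟩ := hF1 k' hk'comm
  have hSgyhk' : Sg yh * k'⁻¹ ∈ C := by
    rw [← hmkc1]
    rw [map_mul, map_inv, hyhmk]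
    simp
  have hyhker : yh ∈ (freePres H).ker := by
    rw [MonoidHom.mem_ker, ← hpiSg]
    have h2 : π (Sg yh * k'⁻¹) = 1 := MonoidHom.mem_ker.1 (hCker hSgyhk')
    have h3 : π k' = 1 := MonoidHom.mem_ker.1 hk'ker
    rw [map_mul, map_inv, h3] at h2
    simpa using h2
  obtain ⟨xg, hxg, hrel⟩ := hf.2 yh (Subgroup.mem_inf.2 ⟨hyhker, hyhcomm⟩)
  obtain ⟨hxgker, hxgcomm⟩ := Subgroup.mem_inf.1 hxg
  -- the two homs FreeGroup G → quotient agreeing centrally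
  set A₁ : FreeGroup G →* (Coprod G (FreeGroup (Fin m))) ⧸ C :=
    mkc.comp (Sg.comp (FreeGroup.map f)) with hA₁def
  set A₂ : FreeGroup G →* (Coprod G (FreeGroup (Fin m))) ⧸ C :=
    mkc.comp ((Coprod.inl).comp (freePres G)) with hA₂def
  have hA12 : ∀ u : FreeGroup G, ∀ q, Commute (A₁ u * (A₂ u)⁻¹) q := by
    intro u
    induction u using FreeGroup.induction_on with
    | C1 => intro q; simp [Commute.one_left]
    | of g =>
      intro q
      show Commute (A₁ (FreeGroup.of g) * (A₂ (FreeGroup.of g))⁻¹) q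
      have h1 : A₁ (FreeGroup.of g) = mkc (σ (f g)) := by
        simp [hA₁def, hSgdef]
      have h2 : A₂ (FreeGroup.of g) = mkc (Coprod.inl g) := by
        simp [hA₂def, freePres]
      rw [h1, h2]
      exact hcentral' _ _ (by rw [MonoidHom.mem_ker, map_mul, map_inv, hσ]; simp [hπdef]) q
    | inv_of g ih =>
      intro q
      show Commute (A₁ (FreeGroup.of g)⁻¹ * (A₂ (FreeGroup.of g)⁻¹)⁻¹) q
      have hd : ∀ q', Commute (A₁ (FreeGroup.of g) * (A₂ (FreeGroup.of g))⁻¹) q' := ih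
      set dq := A₁ (FreeGroup.of g) * (A₂ (FreeGroup.of g))⁻¹ with hdq
      have h2 : A₂ (FreeGroup.of g) = dq⁻¹ * A₁ (FreeGroup.of g) := by rw [hdq]; group
      have h3 : dq⁻¹ * (A₁ (FreeGroup.of g))⁻¹ = (A₁ (FreeGroup.of g))⁻¹ * dq⁻¹ :=
        ((hd ((A₁ (FreeGroup.of g))⁻¹)).inv_left.eq)
      have h1 : A₁ (FreeGroup.of g)⁻¹ * (A₂ (FreeGroup.of g)⁻¹)⁻¹ = dq⁻¹ := by
        calc A₁ (FreeGroup.of g)⁻¹ * (A₂ (FreeGroup.of g)⁻¹)⁻¹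
            = (A₁ (FreeGroup.of g))⁻¹ * A₂ (FreeGroup.of g) := by
              rw [map_inv, map_inv]; group
          _ = (A₁ (FreeGroup.of g))⁻¹ * (dq⁻¹ * A₁ (FreeGroup.of g)) := by rw [← h2]
          _ = ((A₁ (FreeGroup.of g))⁻¹ * dq⁻¹) * A₁ (FreeGroup.of g) := by group
          _ = (dq⁻¹ * (A₁ (FreeGroup.of g))⁻¹) * A₁ (FreeGroup.of g) := by rw [← h3]
          _ = dq⁻¹ := by group
      rw [h1]
      exact (hd q).inv_left
    | mul x y ihx ihy =>
      intro q
      have h1 : A₁ (x * y) * (A₂ (x * y))⁻¹ =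
          (A₁ y * (A₂ y)⁻¹) * (A₁ x * (A₂ x)⁻¹) := by
        rw [map_mul, map_mul]
        have h2 := ((ihy (A₁ x)).eq)
        -- A₁x A₁y A₂y⁻¹ A₂x⁻¹ = (A₁y A₂y⁻¹) A₁x A₂x⁻¹
        calc A₁ x * A₁ y * (A₂ x * A₂ y)⁻¹
            = A₁ x * (A₁ y * (A₂ y)⁻¹) * (A₂ x)⁻¹ := by group
          _ = (A₁ y * (A₂ y)⁻¹) * A₁ x * (A₂ x)⁻¹ := by rw [← h2]
          _ = (A₁ y * (A₂ y)⁻¹) * (A₁ x * (A₂ x)⁻¹) := by group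
      rw [h1]
      exact ((ihy q).mul_left (ihx q))
  have hA12comm : ∀ u ∈ commutator (FreeGroup G), A₁ u = A₂ u := by
    intro u hu
    rw [commutator_eq_closure] at hu
    refine Subgroup.closure_induction ?_ (by simp)
      (fun x y _ _ hx hy => by rw [map_mul, map_mul, hx, hy])
      (fun x _ hx => by rw [map_inv, map_inv, hx]) hu
    rintro x ⟨p, q, rfl⟩
    rw [map_commutatorElement, map_commutatorElement]
    exact central_commutator_congr (hA12 p) (hA12 q)
  have hA₂x : A₂ xg = 1 := by
    have h1 : freePres G xg = 1 := MonoidHom.mem_ker.1 hxgker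
    simp [hA₂def, h1]
  have hA₁x : A₁ xg = 1 := by rw [hA12comm xg hxgcomm, hA₂x]
  have hrelC : Sg (yh⁻¹ * FreeGroup.map f xg) ∈ C := by
    have himg : Subgroup.map Sg ⁅(freePres H).ker, (⊤ : Subgroup (FreeGroup H))⁆ ≤ C := by
      rw [Subgroup.map_commutator]
      apply Subgroup.commutator_mono
      · rintro z ⟨y, hy, rfl⟩
        rw [MonoidHom.mem_ker, hpiSg]
        exact MonoidHom.mem_ker.1 hy
      · exact le_top
    exact himg (Subgroup.mem_map_of_mem _ hrel)
  have hmkSyh : mkc (Sg yh) = mkc (Sg (FreeGroup.map f xg)) := by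
    have h1 : mkc (Sg (yh⁻¹ * FreeGroup.map f xg)) = 1 := (hmkc1 _).2 hrelC
    rw [map_mul, map_inv, map_mul, map_inv] at h1
    rw [← inv_mul_eq_one]
    exact h1
  have hmk1 : mkc k' = 1 := by
    rw [← hyhmk, hmkSyh]
    exact hA₁x
  exact ⟨k', (hmkc1 _).1 hmk1, n₀, hn₀N, by rw [hk'def]; group⟩

end Key1

theorem neumann_fin_ker {Γ H : Type*} [Group Γ] [Group H]
    {SΓ : Set Γ} (hSΓfin : SΓ.Finite) (hSΓ : Subgroup.closure SΓ = ⊤)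
    {r : ℕ} {S : Finset (FreeGroup (Fin r))}
    (θ : (FreeGroup (Fin r) ⧸ Subgroup.normalClosure ((S : Set (FreeGroup (Fin r))))) ≃* H)
    (π : Γ →* H) (hπ : Function.Surjective π) :
    ∃ T : Set Γ, T.Finite ∧ π.ker = Subgroup.normalClosure T := by
  classical
  set R : Subgroup (FreeGroup (Fin r)) :=
    Subgroup.normalClosure ((S : Set (FreeGroup (Fin r)))) with hR
  let ρ : FreeGroup (Fin r) →* H := θ.toMonoidHom.comp (QuotientGroup.mk' R)
  have hρsurj : Function.Surjective ρ :=
    θ.surjective.comp (QuotientGroup.mk'_surjective R)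
  let γ : FreeGroup (Fin r) →* Γ :=
    FreeGroup.lift (fun i => Function.surjInv hπ (ρ (FreeGroup.of i)))
  have hπγ : π.comp γ = ρ := by
    apply FreeGroup.ext_hom
    intro i
    simp only [MonoidHom.comp_apply, γ, FreeGroup.lift_apply_of]
    exact Function.surjInv_eq hπ _
  have hπγ' : ∀ x, π (γ x) = ρ x := fun x => DFunLike.congr_fun hπγ x
  let κ : Γ → Γ := fun t => t * (γ (Function.surjInv hρsurj (π t)))⁻¹
  have hκ : ∀ t, κ t ∈ π.ker := by
    intro t
    simp only [κ, MonoidHom.mem_ker, map_mul, map_inv, hπγ']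
    rw [Function.surjInv_eq hρsurj]
    group
  set T : Set Γ := (⇑γ '' (S : Set (FreeGroup (Fin r)))) ∪ (κ '' SΓ) with hT
  have hγS : ∀ s ∈ (S : Set (FreeGroup (Fin r))), γ s ∈ π.ker := by
    intro s hs
    have hsR : s ∈ R := Subgroup.subset_normalClosure hs
    have : ρ s = 1 := by
      simp only [ρ, MonoidHom.comp_apply]
      rw [show (QuotientGroup.mk' R) s = 1 from (QuotientGroup.eq_one_iff s).2 hsR]
      simp
    simp [MonoidHom.mem_ker, hπγ', this]
  have hTker : T ⊆ (π.ker : Set Γ) := by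
    rintro x (⟨s, hs, rfl⟩ | ⟨t, _, rfl⟩)
    · exact hγS s hs
    · exact hκ t
  refine ⟨T, ((S.finite_toSet.image ⇑γ).union (hSΓfin.image κ)), le_antisymm ?_
    (Subgroup.normalClosure_le_normal hTker)⟩
  set M : Subgroup Γ := Subgroup.normalClosure T with hM
  have hTM : T ⊆ (M : Set Γ) := Subgroup.subset_normalClosure
  let mkM : Γ →* Γ ⧸ M := QuotientGroup.mk' M
  let γbar : FreeGroup (Fin r) →* Γ ⧸ M := mkM.comp γ
  have hkillR : R ≤ γbar.ker := by
    apply Subgroup.normalClosure_le_normal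
    intro s hs
    have : γ s ∈ M := hTM (Or.inl ⟨s, hs, rfl⟩)
    simpa [γbar, MonoidHom.mem_ker, mkM, QuotientGroup.eq_one_iff] using this
  let χ₀ : (FreeGroup (Fin r) ⧸ R) →* Γ ⧸ M :=
    QuotientGroup.lift R γbar hkillR
  let χ : H →* Γ ⧸ M := χ₀.comp θ.symm.toMonoidHom
  have hχρ : ∀ x, χ (ρ x) = γbar x := by
    intro x
    simp only [χ, χ₀, ρ, MonoidHom.comp_apply, MulEquiv.coe_toMonoidHom]
    rw [MulEquiv.symm_apply_apply]
    rfl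
  have key : ∀ x, χ (π x) = mkM x := by
    have heq : Set.EqOn (χ.comp π) mkM SΓ := by
      intro t ht
      have h1 : π t = ρ (Function.surjInv hρsurj (π t)) :=
        (Function.surjInv_eq hρsurj _).symm
      simp only [MonoidHom.comp_apply]
      rw [h1, hχρ]
      have h2 : κ t ∈ M := hTM (Or.inr ⟨t, ht, rfl⟩)
      have : mkM (κ t) = 1 := (QuotientGroup.eq_one_iff _).2 h2
      simp only [κ, map_mul, map_inv] at this
      have h3 : mkM t = mkM (γ (Function.surjInv hρsurj (π t))) := by
        rw [← mul_inv_eq_one]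
        exact this
      exact h3.symm
    have h2 := MonoidHom.eqOn_closure heq
    rw [hSΓ] at h2
    intro x
    exact h2 (Subgroup.mem_top x)
  intro x hx
  have h1 : mkM x = 1 := by
    rw [← key x, MonoidHom.mem_ker.mp hx, map_one]
  exact (QuotientGroup.eq_one_iff x).1 h1

section MainLift

theorem exists_unique_lift {G H : Type*} [Group G] [Group H]
    (hGfg : Group.FG G) (hHfp : FinitelyPresentable H)
    (f : G →* H) (hf : TwoConnected f)
    {A : Type*} [Group A] (hA : AcyclicallyClosed A) (ρ : G →* A) :
    ∃! ψ : H →* A, ψ.comp f = ρ := by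
  classical
  obtain ⟨r, S, ⟨θ⟩⟩ := hHfp
  -- generators of H
  set h : Fin r → H := fun j => θ (QuotientGroup.mk (FreeGroup.of j)) with hhdef
  have hHgen : Subgroup.closure (Set.range h) = ⊤ := by
    rw [eq_top_iff]
    rintro x -
    obtain ⟨y, rfl⟩ := θ.surjective x
    obtain ⟨u, rfl⟩ := QuotientGroup.mk_surjective y
    have hu : u ∈ Subgroup.closure (Set.range (FreeGroup.of : Fin r → _)) := by
      rw [FreeGroup.closure_range_of]; trivial
    refine Subgroup.closure_induction ?_ (by simpa using one_mem _)
      (fun a b _ _ ha hb => by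
        rw [QuotientGroup.mk_mul, map_mul]; exact mul_mem ha hb)
      (fun a _ ha => by
        rw [QuotientGroup.mk_inv, map_inv]; exact inv_mem ha) hu
    rintro a ⟨j, rfl⟩
    exact Subgroup.subset_closure ⟨j, rfl⟩
  -- H₁-surjectivity provides `G`-approximations to the generators
  have hex_u : ∀ j, ∃ g : G, Abelianization.of (f g) = Abelianization.of (h j) := by
    intro j
    obtain ⟨a, ha⟩ := hf.1.surjective (Abelianization.of (h j))
    obtain ⟨g, rfl⟩ := QuotientGroup.mk_surjective a
    refine ⟨g, ?_⟩
    rw [← ha, ← Abelianization.map_of]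
    rfl
  choose u hu using hex_u
  set c : Fin r → H := fun j => (f (u j))⁻¹ * h j with hcdef
  have hc : ∀ j, c j ∈ commutator H := by
    intro j
    have h1 : Abelianization.of (c j) = 1 := by
      rw [hcdef]
      rw [map_mul, map_inv, hu j]
      simp
    exact (QuotientGroup.eq_one_iff _).1 h1
  set π : Coprod G (FreeGroup (Fin r)) →* H := Coprod.lift f (FreeGroup.lift c) with hπdef
  have hπinl : ∀ g, π (Coprod.inl g) = f g := fun g => by simp [hπdef]
  have hπinr : ∀ j, π (Coprod.inr (FreeGroup.of j)) = c j := fun j => by simp [hπdef]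
  have hπsurj : Function.Surjective π := by
    rw [← MonoidHom.range_eq_top, eq_top_iff, ← hHgen, Subgroup.closure_le]
    rintro x ⟨j, rfl⟩
    refine ⟨Coprod.inl (u j) * Coprod.inr (FreeGroup.of j), ?_⟩
    rw [map_mul, hπinl, hπinr, hcdef]
    group
  -- lifting the `c j` to commutator words
  have hwex : ∀ j, ∃ w : Coprod G (FreeGroup (Fin r)),
      w ∈ commutator (Coprod G (FreeGroup (Fin r))) ∧ π w = c j := by
    intro j
    have hcj := hc j
    rw [commutator_eq_closure] at hcj
    refine Subgroup.closure_induction ?_ ⟨1, one_mem _, map_one _⟩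
      (fun x y _ _ ⟨w₁, h₁, h₁'⟩ ⟨w₂, h₂, h₂'⟩ =>
        ⟨w₁ * w₂, mul_mem h₁ h₂, by rw [map_mul, h₁', h₂']⟩)
      (fun x _ ⟨w₁, h₁, h₁'⟩ => ⟨w₁⁻¹, inv_mem h₁, by rw [map_inv, h₁']⟩) hcj
    rintro x ⟨p, q, rfl⟩
    refine ⟨⁅Function.surjInv hπsurj p, Function.surjInv hπsurj q⁆,
      Subgroup.commutator_mem_commutator (Subgroup.mem_top _) (Subgroup.mem_top _), ?_⟩
    rw [map_commutatorElement, Function.surjInv_eq hπsurj, Function.surjInv_eq hπsurj]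
  choose w hwcomm hwπ using hwex
  set N : Subgroup (Coprod G (FreeGroup (Fin r))) :=
    Subgroup.normalClosure (Set.range fun j => Coprod.inr (FreeGroup.of j) * (w j)⁻¹)
    with hNdef
  -- finite generation of the coproduct
  obtain ⟨SG, hSGtop, hSGfin⟩ := Group.fg_iff.1 hGfg
  set SΓ : Set (Coprod G (FreeGroup (Fin r))) :=
    (Coprod.inl '' SG) ∪ Set.range (fun j : Fin r => Coprod.inr (FreeGroup.of j)) with hSΓdef
  have hSΓfin : SΓ.Finite := (hSGfin.image _).union (Set.finite_range _)
  have hSΓtop : Subgroup.closure SΓ = ⊤ := by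
    rw [eq_top_iff]
    rintro x -
    induction x using Coprod.induction_on with
    | inl a =>
      have ha : a ∈ Subgroup.closure SG := by rw [hSGtop]; trivial
      refine Subgroup.closure_induction ?_ (by simpa using one_mem _)
        (fun p q _ _ hp hq => by rw [map_mul]; exact mul_mem hp hq)
        (fun p _ hp => by rw [map_inv]; exact inv_mem hp) ha
      intro p hp
      exact Subgroup.subset_closure (Or.inl ⟨p, hp, rfl⟩)
    | inr b =>
      have hb : b ∈ Subgroup.closure (Set.range (FreeGroup.of : Fin r → _)) := by
        rw [FreeGroup.closure_range_of]; trivial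
      refine Subgroup.closure_induction ?_ (by simpa using one_mem _)
        (fun p q _ _ hp hq => by rw [map_mul]; exact mul_mem hp hq)
        (fun p _ hp => by rw [map_inv]; exact inv_mem hp) hb
      rintro p ⟨j, rfl⟩
      exact Subgroup.subset_closure (Or.inr ⟨j, rfl⟩)
    | mul x y hx hy => exact mul_mem hx hy
  -- Neumann: the kernel of π is finitely normally generated
  obtain ⟨T, hTfin, hTker⟩ := neumann_fin_ker hSΓfin hSΓtop θ π hπsurj
  set s : ℕ := hTfin.toFinset.card with hsdef
  set e : { x // x ∈ hTfin.toFinset } ≃ Fin s := hTfin.toFinset.equivFin with hedef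
  set kk : Fin s → Coprod G (FreeGroup (Fin r)) := fun i => (e.symm i : _) with hkkdef
  have hrange : Set.range kk = T := by
    ext x
    constructor
    · rintro ⟨i, rfl⟩
      exact hTfin.mem_toFinset.1 (e.symm i).2
    · intro hx
      exact ⟨e ⟨x, hTfin.mem_toFinset.2 hx⟩, by rw [hkkdef]; simp⟩
  have hker_eq : π.ker = Subgroup.normalClosure (Set.range kk) := by
    rw [hrange]; exact hTker
  -- splitting of the normal generators via key1
  have hsplit : ∀ t, ∃ d ∈ ⁅Subgroup.normalClosure (Set.range kk),
      (⊤ : Subgroup (Coprod G (FreeGroup (Fin r))))⁆, ∃ n ∈ N, kk t = d * n := by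
    intro t
    have hkt : kk t ∈ π.ker := by
      rw [hker_eq]
      exact Subgroup.subset_normalClosure ⟨t, rfl⟩
    obtain ⟨d, hd, n, hn, hdn⟩ := key1 hf hc hwcomm hwπ hπsurj (kk t) hkt
    rw [← hker_eq] at *
    exact ⟨d, by rwa [← hker_eq], n, hn, hdn⟩
  -- now solve the pushed system in A
  set wA : Fin r → Coprod A (FreeGroup (Fin r)) :=
    fun j => Coprod.map ρ (MonoidHom.id _) (w j) with hwAdef
  have hwAacy : IsAcyclicSystem wA := by
    intro j
    rw [hwAdef, acyProj_map_apply]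
    exact acyProj_mem_commutator (hwcomm j)
  obtain ⟨a, ha, hauniq⟩ := hA r wA hwAacy
  set ψt : Coprod G (FreeGroup (Fin r)) →* A := Coprod.lift ρ (FreeGroup.lift a) with hψtdef
  have hψtw : ∀ j, ψt (w j) = a j := by
    intro j
    rw [hψtdef, lift_eq_eval_map, MonoidHom.comp_apply]
    exact ha j
  have hψtinr : ∀ j, ψt (Coprod.inr (FreeGroup.of j)) = a j := fun j => by simp [hψtdef]
  have hψtN : ∀ n ∈ N, ψt n = 1 := by
    intro n hn
    refine (Subgroup.normalClosure_le_normal (N := ψt.ker) ?_) hn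
    rintro x ⟨j, rfl⟩
    rw [SetLike.mem_coe, MonoidHom.mem_ker, map_mul, map_inv, hψtinr, hψtw]
    group
  have hψtker : ∀ x ∈ π.ker, ψt x = 1 := by
    have hkill := solution_kill hA ψt kk hψtN hsplit
    intro x hx
    rw [hker_eq] at hx
    refine (Subgroup.normalClosure_le_normal (N := ψt.ker) ?_) hx
    rintro y ⟨t, rfl⟩
    exact hkill t
  -- descend ψt along π
  have hconst : ∀ γ₁ γ₂, π γ₁ = π γ₂ → ψt γ₁ = ψt γ₂ := by
    intro γ₁ γ₂ hγ
    have h1 : γ₁ * γ₂⁻¹ ∈ π.ker := by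
      rw [MonoidHom.mem_ker, map_mul, map_inv, hγ]
      group
    have h2 := hψtker _ h1
    rw [map_mul, map_inv] at h2
    exact mul_inv_eq_one.1 h2
  set σH : H → Coprod G (FreeGroup (Fin r)) := Function.surjInv hπsurj with hσHdef
  have hσH : ∀ x, π (σH x) = x := fun x => Function.surjInv_eq hπsurj x
  set ψ : H →* A := MonoidHom.mk' (fun x => ψt (σH x))
    (fun x y => by
      rw [← map_mul]
      exact hconst _ _ (by rw [map_mul, hσH, hσH, hσH])) with hψdef
  have hψπ : ∀ γ, ψ (π γ) = ψt γ := by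
    intro γ
    exact hconst _ _ (hσH (π γ))
  have hψf : ψ.comp f = ρ := by
    ext g
    rw [MonoidHom.comp_apply, ← hπinl g, hψπ]
    simp [hψtdef]
  -- uniqueness
  have huniq : ∀ ψ' : H →* A, ψ'.comp f = ρ → ψ' = ψ := by
    intro ψ' hψ'
    have hχ : ψ'.comp π = Coprod.lift ρ (FreeGroup.lift (fun j => ψ' (c j))) := by
      apply Coprod.hom_ext
      · ext g
        simp only [MonoidHom.comp_apply, Coprod.lift_apply_inl]
        rw [hπinl]
        exact DFunLike.congr_fun hψ' g
      · apply FreeGroup.ext_hom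
        intro j
        simp only [MonoidHom.comp_apply, Coprod.lift_apply_inr, FreeGroup.lift_apply_of]
        rw [hπinr]
    have hsol : IsSolution wA (fun j => ψ' (c j)) := by
      intro j
      have h1 : acyEval (fun j => ψ' (c j)) (wA j) =
          (Coprod.lift ρ (FreeGroup.lift (fun j => ψ' (c j)))) (w j) := by
        rw [lift_eq_eval_map, MonoidHom.comp_apply, hwAdef]
      rw [h1, ← hχ, MonoidHom.comp_apply, hwπ]
    have hac : (fun j => ψ' (c j)) = a := hauniq _ hsol
    have hχψt : ψ'.comp π = ψt := by
      rw [hχ, hac, hψtdef]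
    ext x
    obtain ⟨γ, rfl⟩ := hπsurj x
    rw [← MonoidHom.comp_apply, hχψt, hψπ]
  exact ⟨ψ, hψf, huniq⟩

end MainLift

/-- If `f : G → H` is a 2-connected homomorphism (isomorphism on `H₁`,
surjection on `H₂`) from a finitely generated group to a finitely presentable
group, then the induced map `f^acy : G^acy → H^acy` on acyclic closures (the
unique homomorphism with `f^acy ∘ ι_G = ι_H ∘ f`) is an isomorphism.  (In
particular, for a homology cylinder `(M, i₊, i₋)`, both `i±^acy` are
isomorphisms, so `σ^acy(M) = (i₊^acy)⁻¹ ∘ i₋^acy` is an automorphism of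
`F_{2g}^acy`.) -/
theorem acyclic_closure_iso {G H : Type u} [Group G] [Group H]
    (hGfg : Group.FG G) (hHfp : FinitelyPresentable H)
    (Gacy Hacy : Type u) [Group Gacy] [Group Hacy]
    (ιG : G →* Gacy) (ιH : H →* Hacy)
    (hG : IsAcyclicClosure Gacy ιG) (hH : IsAcyclicClosure Hacy ιH)
    (f : G →* H) (hf : TwoConnected f)
    (facy : Gacy →* Hacy) (hfacy : facy.comp ιG = ιH.comp f) :
    Function.Bijective facy := by
  obtain ⟨hGc, hGuniv⟩ := hG
  obtain ⟨hHc, hHuniv⟩ := hH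
  obtain ⟨φ, hφ, -⟩ := exists_unique_lift hGfg hHfp f hf hGc ιG
  obtain ⟨g, hg, -⟩ := hHuniv Gacy hGc φ
  have hfacy' : ∀ x, facy (ιG x) = ιH (f x) := fun x => DFunLike.congr_fun hfacy x
  have hφ' : ∀ x, φ (f x) = ιG x := fun x => DFunLike.congr_fun hφ x
  have hg' : ∀ x, g (ιH x) = φ x := fun x => DFunLike.congr_fun hg x
  -- g ∘ facy = id
  obtain ⟨idG, -, hidGuniq⟩ := hGuniv Gacy hGc ιG
  have h1 : (g.comp facy).comp ιG = ιG := by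
    ext x
    simp only [MonoidHom.comp_apply]
    rw [hfacy', hg', hφ']
  have h2 : g.comp facy = MonoidHom.id Gacy :=
    (hidGuniq _ h1).trans (hidGuniq (MonoidHom.id Gacy) (by ext x; simp)).symm
  -- facy ∘ φ = ιH
  obtain ⟨ψ₀, -, hψ₀uniq⟩ := exists_unique_lift hGfg hHfp f hf hHc (ιH.comp f)
  have h3 : facy.comp φ = ιH := by
    have e1 : (facy.comp φ).comp f = ιH.comp f := by
      ext x
      simp only [MonoidHom.comp_apply]
      rw [hφ', hfacy']
    exact (hψ₀uniq _ e1).trans (hψ₀uniq ιH rfl).symm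
  -- facy ∘ g = id
  obtain ⟨idH, -, hidHuniq⟩ := hHuniv Hacy hHc ιH
  have h4 : (facy.comp g).comp ιH = ιH := by
    ext x
    simp only [MonoidHom.comp_apply]
    rw [hg', ← MonoidHom.comp_apply facy φ, h3]
  have h5 : facy.comp g = MonoidHom.id Hacy :=
    (hidHuniq _ h4).trans (hidHuniq (MonoidHom.id Hacy) (by ext x; simp)).symm
  constructor
  · intro x y hxy
    have hx := DFunLike.congr_fun h2 x
    have hy := DFunLike.congr_fun h2 y
    simp only [MonoidHom.comp_apply, MonoidHom.id_apply] at hx hy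
    rw [← hx, ← hy, hxy]
  · intro y
    have hy := DFunLike.congr_fun h5 y
    simp only [MonoidHom.comp_apply, MonoidHom.id_apply] at hy
    exact ⟨g y, hy⟩
end SolutionKill
end
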